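/- arXiv:2406.17748 — 6 statements merged into one kernel-verified Lean document; each statement's English description precedes it below -/
import Mathlib

section
/- Let H ∈ ℝ^{mn×mn} and define the rearrangement operator R by R(H)[mi+i', nj+j'] = H[mj+i, mj'+i'] for 0 ≤ i,i' < m and 0 ≤ j,j' < n, giving R(H) ∈ ℝ^{m²×n²}. Then H = A ⊗ B for A ∈ ℝ^{m×m}, B ∈ ℝ^{n×n} if and only if R(H) = vec(A) vec(B)ᵀ. -/
open Matrix Kronecker

/-- Vectorization of an `m × n` matrix: the index pair `(i, j)` represents
the entry in row `i`, column `j` (an identification of `ℝ^{m×n}` with `ℝ^{mn}`). -/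
def vec {m n : ℕ} (M : Matrix (Fin m) (Fin n) ℝ) : Fin m × Fin n → ℝ :=
  fun p => M p.1 p.2

/-- The van Loan rearrangement operator `R : ℝ^{mn×mn} → ℝ^{m²×n²}`:
the entry of `R(H)` at row pair `(i, i')` and column pair `(j, j')` is the
entry of `H` at the mn-indices `(i, j)` (row) and `(i', j')` (column). -/
def rearrange {m n : ℕ} (H : Matrix (Fin m × Fin n) (Fin m × Fin n) ℝ) :
    Matrix (Fin m × Fin m) (Fin n × Fin n) ℝ :=
  Matrix.of fun p q => H (p.1, q.1) (p.2, q.2)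

/-- `H = A ⊗ B` if and only if the rearrangement of `H` equals the rank-one
outer product `vec(A) vec(B)ᵀ`. -/
theorem eq_kronecker_iff_rearrange_eq_vecMulVec {m n : ℕ}
    (H : Matrix (Fin m × Fin n) (Fin m × Fin n) ℝ)
    (A : Matrix (Fin m) (Fin m) ℝ) (B : Matrix (Fin n) (Fin n) ℝ) :
    H = A ⊗ₖ B ↔ rearrange H = vecMulVec (_root_.vec A) (_root_.vec B) := by
  constructor
  · rintro rfl
    ext ⟨i, i'⟩ ⟨j, j'⟩
    simp [rearrange, vecMulVec, _root_.vec, kroneckerMap_apply]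
  · intro h
    ext ⟨i, j⟩ ⟨i', j'⟩
    have := congrFun (congrFun h (i, i')) (j, j')
    simpa [rearrange, vecMulVec, _root_.vec, kroneckerMap_apply] using this
end

section
/- For any H ∈ ℝ^{mn×mn} and any L ∈ ℝ^{m×m}, R ∈ ℝ^{n×n}, the Frobenius norm identity ‖H − L ⊗ R‖_F = ‖R̂(H) − vec(L) vec(R)ᵀ‖_F holds, where R̂ is the rearrangement operator defined by R̂(H)[mi+i', nj+j'] = H[mj+i, mj'+i']. -/
open Matrix Kronecker

/-- The Frobenius norm of a matrix. -/
noncomputable def frobNorm {a b : Type*} [Fintype a] [Fintype b]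
    (M : Matrix a b ℝ) : ℝ :=
  Real.sqrt (∑ i, ∑ j, (M i j) ^ 2)

/-- `‖H − L ⊗ R‖_F = ‖R̂(H) − vec(L) vec(R)ᵀ‖_F`. -/
theorem frobNorm_sub_kronecker {m n : ℕ}
    (H : Matrix (Fin m × Fin n) (Fin m × Fin n) ℝ)
    (L : Matrix (Fin m) (Fin m) ℝ) (R : Matrix (Fin n) (Fin n) ℝ) :
    frobNorm (H - L ⊗ₖ R) = frobNorm (rearrange H - vecMulVec (_root_.vec L) (_root_.vec R)) := by
  unfold frobNorm rearrange _root_.vec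
  congr 1
  simp only [Fintype.sum_prod_type, Matrix.sub_apply, Matrix.kroneckerMap_apply,
    Matrix.vecMulVec_apply, Matrix.of_apply]
  rw [show (∑ i : Fin m, ∑ i' : Fin n, ∑ j : Fin m, ∑ j' : Fin n,
        (H (i,i') (j,j') - L i j * R i' j')^2)
      = ∑ i : Fin m, ∑ j : Fin m, ∑ i' : Fin n, ∑ j' : Fin n,
        (H (i,i') (j,j') - L i j * R i' j')^2 from
    Finset.sum_congr rfl fun i _ => Finset.sum_comm]
end

section
/- Let g₁, …, g_T ∈ ℝ^{mn} be the vectorizations of matrices G₁, …, G_T ∈ ℝ^{m×n}, each of rank at most r. Then for any ε > 0, ε I_{mn} + (1/r) ∑_{t=1}^T g_t g_tᵀ ≼ (ε I_m + ∑_{t=1}^T G_t G_tᵀ)^{1/2} ⊗ (ε I_n + ∑_{t=1}^T G_tᵀ G_t)^{1/2}, where ≼ denotes the Loewner order on symmetric matrices. -/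
open Matrix Kronecker BigOperators

set_option linter.unusedSectionVars false
set_option linter.unusedVariables false
set_option maxHeartbeats 1600000

open scoped ComplexOrder in
noncomputable def Matrix.PosSemidef.sqrt {n 𝕜 : Type*} [Fintype n] [DecidableEq n] [RCLike 𝕜]
    {A : Matrix n n 𝕜} (hA : A.PosSemidef) : Matrix n n 𝕜 :=
  hA.1.eigenvectorUnitary.1 * diagonal ((↑) ∘ (√·) ∘ hA.1.eigenvalues) *
  (star hA.1.eigenvectorUnitary : Matrix n n 𝕜)

section sqrtPort
open scoped MatrixOrder
variable {k : Type*} [Fintype k] [DecidableEq k]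

lemma Matrix.PosSemidef.sqrt_eq_cfcSqrt {A : Matrix k k ℝ} (hA : A.PosSemidef) :
    hA.sqrt = CFC.sqrt A := by
  rw [CFC.sqrt_eq_cfc, cfc_nnreal_eq_real _ A, hA.1.cfc_eq]
  simp only [IsHermitian.cfc, Matrix.PosSemidef.sqrt, Unitary.conjStarAlgAut_apply]
  congr 3
  ext i
  simp [Real.coe_sqrt, Real.coe_toNNReal', hA.eigenvalues_nonneg i]

lemma Matrix.PosSemidef.posSemidef_sqrt {A : Matrix k k ℝ} (hA : A.PosSemidef) :
    hA.sqrt.PosSemidef := by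
  rw [hA.sqrt_eq_cfcSqrt]; exact (CFC.sqrt_nonneg A).posSemidef

lemma Matrix.PosSemidef.sqrt_mul_self {A : Matrix k k ℝ} (hA : A.PosSemidef) :
    hA.sqrt * hA.sqrt = A := by
  rw [hA.sqrt_eq_cfcSqrt]; exact CFC.sqrt_mul_sqrt_self A hA.nonneg

lemma Matrix.PosSemidef.sq_sqrt {A : Matrix k k ℝ} (hA : A.PosSemidef) :
    hA.sqrt ^ 2 = A := by
  rw [pow_two]; exact hA.sqrt_mul_self

lemma Matrix.PosSemidef.eq_sqrt_of_sq_eq {B A : Matrix k k ℝ} (hB : B.PosSemidef)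
    (hA : A.PosSemidef) (h : B ^ 2 = A) : B = hA.sqrt := by
  rw [hA.sqrt_eq_cfcSqrt, eq_comm, CFC.sqrt_eq_iff A B hA.nonneg hB.nonneg, ← h, pow_two]

end sqrtPort

section helpers
variable {k : Type*} [Fintype k] [DecidableEq k]

lemma conj_mono {A B W : Matrix k k ℝ} (hW : Wᵀ = W) (h : (B - A).PosSemidef) :
    (W * B * W - W * A * W).PosSemidef := by
  have h2 := h.conjTranspose_mul_mul_same W
  rw [conjTranspose_eq_transpose_of_trivial, hW] at h2
  have h3 : W * (B - A) * W = W * B * W - W * A * W := by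
    rw [Matrix.mul_sub, Matrix.sub_mul]
  rwa [h3] at h2

lemma sqrt_of_sq {C D : Matrix k k ℝ} (hC : C.PosSemidef) (hD : D.PosSemidef)
    (hCD : C * C = D) : hD.sqrt = C :=
  (hC.eq_sqrt_of_sq_eq hD (by rw [pow_two, hCD])).symm

lemma sqrt_one_eq : (Matrix.PosSemidef.one : (1 : Matrix k k ℝ).PosSemidef).sqrt = 1 :=
  sqrt_of_sq Matrix.PosSemidef.one Matrix.PosSemidef.one (one_mul 1)

/-- Monotonicity of the matrix square root. -/
lemma sqrt_mono {A B : Matrix k k ℝ} (hA : A.PosSemidef) (hB : B.PosSemidef)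
    (h : (B - A).PosSemidef) : (hB.sqrt - hA.sqrt).PosSemidef := by
  set S := hA.sqrt with hSdef
  set T := hB.sqrt with hTdef
  have hS := hA.posSemidef_sqrt
  have hT := hB.posSemidef_sqrt
  have herm : (T - S).IsHermitian := hT.1.sub hS.1
  refine herm.posSemidef_iff_eigenvalues_nonneg.mpr (show ∀ i, 0 ≤ herm.eigenvalues i from ?_)
  intro i
  by_contra hneg
  push_neg at hneg
  set t := herm.eigenvalues i with htdef
  set v : k → ℝ := ⇑(herm.eigenvectorBasis i) with hvdef
  have hv : (T - S) *ᵥ v = t • v := herm.mulVec_eigenvectorBasis i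
  have hvv : v ⬝ᵥ v = 1 := by
    have ho := herm.eigenvectorBasis.orthonormal.1 i
    have : (v ⬝ᵥ v) = ‖herm.eigenvectorBasis i‖ ^ 2 := by
      rw [← real_inner_self_eq_norm_sq]
      simp only [real_inner_self_eq_norm_sq, EuclideanSpace.real_norm_sq_eq, hvdef, dotProduct]; simp only [pow_two]
    rw [this, ho, one_pow]
  have hSv : S *ᵥ v = T *ᵥ v - t • v := by
    rw [Matrix.sub_mulVec] at hv
    linear_combination (norm := module) -hv
  -- quadratic form of B - A at v
  have hq := h.dotProduct_mulVec_nonneg v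
  have hsym : ∀ (M : Matrix k k ℝ), Mᵀ = M → ∀ w : k → ℝ,
      w ⬝ᵥ ((M * M) *ᵥ w) = (M *ᵥ w) ⬝ᵥ (M *ᵥ w) := by
    intro M hM w
    rw [← Matrix.mulVec_mulVec, Matrix.dotProduct_mulVec]
    congr 1
    rw [← Matrix.mulVec_transpose, hM]
  have hBq : v ⬝ᵥ (B *ᵥ v) = (T *ᵥ v) ⬝ᵥ (T *ᵥ v) := by
    rw [← hB.sq_sqrt, pow_two]
    exact hsym T (by rw [← conjTranspose_eq_transpose_of_trivial, hT.1]) v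
  have hAq : v ⬝ᵥ (A *ᵥ v) = (S *ᵥ v) ⬝ᵥ (S *ᵥ v) := by
    rw [← hA.sq_sqrt, pow_two]
    exact hsym S (by rw [← conjTranspose_eq_transpose_of_trivial, hS.1]) v
  have hTpos : 0 ≤ v ⬝ᵥ (T *ᵥ v) := by simpa using hT.dotProduct_mulVec_nonneg v
  have hvT : v ⬝ᵥ (T *ᵥ v) = (T *ᵥ v) ⬝ᵥ v := dotProduct_comm _ _
  have expand : v ⬝ᵥ ((B - A) *ᵥ v) = 2 * t * (v ⬝ᵥ (T *ᵥ v)) - t ^ 2 := by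
    rw [Matrix.sub_mulVec, dotProduct_sub, hBq, hAq, hSv]
    simp only [dotProduct_sub, sub_dotProduct, smul_dotProduct, dotProduct_smul,
      smul_eq_mul]
    rw [hvv]
    rw [dotProduct_comm (T *ᵥ v) v]; ring
  have hq' : 0 ≤ 2 * t * (v ⬝ᵥ (T *ᵥ v)) - t ^ 2 := by
    rw [← expand]; simpa using hq
  nlinarith [sq_nonneg t, mul_nonneg hTpos (le_of_lt (neg_pos.mpr hneg))]

/-- If `N ≼ 1` then `N ≼ √N`. -/
lemma le_sqrt_self {N : Matrix k k ℝ} (hN : N.PosSemidef) (h1 : ((1 : Matrix k k ℝ) - N).PosSemidef) :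
    (hN.sqrt - N).PosSemidef := by
  set S := hN.sqrt with hSdef
  have hS : S.PosSemidef := hN.posSemidef_sqrt
  set Q := hS.sqrt with hQdef
  have hQ : Q.PosSemidef := hS.posSemidef_sqrt
  have hQQ : Q * Q = S := hS.sqrt_mul_self
  have hSS : S * S = N := hN.sqrt_mul_self
  have h1S : ((1 : Matrix k k ℝ) - S).PosSemidef := by
    have := sqrt_mono hN Matrix.PosSemidef.one h1
    rwa [sqrt_one_eq] at this
  have hkey : Q * (1 - S) * Q = S - N := by
    rw [Matrix.mul_sub, Matrix.mul_one, Matrix.sub_mul, hQQ, ← hSS]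
    rw [show Q * S * Q = S * S by rw [← hQQ]; noncomm_ring]
  have := h1S.conjTranspose_mul_mul_same Q
  rw [conjTranspose_eq_transpose_of_trivial,
    show Qᵀ = Q by rw [← conjTranspose_eq_transpose_of_trivial, hQ.1], hkey] at this
  exact this

/-- Crux: if `N ≼ 1` and `N ≼ C²` with `C` PSD, then `N ≼ C`. -/
lemma crux {N C : Matrix k k ℝ} (hN : N.PosSemidef) (hC : C.PosSemidef)
    (h1 : ((1 : Matrix k k ℝ) - N).PosSemidef) (h2 : (C * C - N).PosSemidef) :
    (C - N).PosSemidef := by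
  have hCC : (C * C).PosSemidef := by
    have := hC.pow 2
    rwa [pow_two] at this
  have hs1 : (hCC.sqrt - hN.sqrt).PosSemidef := sqrt_mono hN hCC h2
  rw [sqrt_of_sq hC hCC rfl] at hs1
  have hs2 : (hN.sqrt - N).PosSemidef := le_sqrt_self hN h1
  have : C - N = (C - hN.sqrt) + (hN.sqrt - N) := by abel
  rw [this]
  exact hs1.add hs2

end helpers

/-- Core rank inequality: `(tr (Gᵀ X))² ≤ r · tr (Xᵀ (G Gᵀ) X)` when `rank G ≤ r`. -/
lemma core_ineq {m n r : ℕ} (G X : Matrix (Fin m) (Fin n) ℝ) (hrank : G.rank ≤ r) :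
    (Matrix.trace (Gᵀ * X)) ^ 2 ≤ (r : ℝ) * Matrix.trace (Xᵀ * (G * Gᵀ) * X) := by
  classical
  have hApsd : (G * Gᵀ).PosSemidef := by
    have := Matrix.posSemidef_self_mul_conjTranspose G
    rwa [conjTranspose_eq_transpose_of_trivial] at this
  set A := G * Gᵀ with hAdef
  have herm : A.IsHermitian := hApsd.1
  have hAt : Aᵀ = A := by rw [← conjTranspose_eq_transpose_of_trivial, herm]
  set d : Fin m → ℝ := herm.eigenvalues with hddef
  set u : Fin m → Fin m → ℝ := fun j => ⇑(herm.eigenvectorBasis j) with hudef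
  have f1 : ∀ j, A *ᵥ u j = d j • u j := fun j => herm.mulVec_eigenvectorBasis j
  -- completeness: ∑ p, u p i * u p j = δ i j
  have f3 : ∀ i j, (∑ p, u p i * u p j) = if i = j then (1:ℝ) else 0 := by
    have hU : (herm.eigenvectorUnitary : Matrix (Fin m) (Fin m) ℝ) *
        star (herm.eigenvectorUnitary : Matrix (Fin m) (Fin m) ℝ) = 1 :=
      (Matrix.mem_unitaryGroup_iff).mp (herm.eigenvectorUnitary).2
    intro i j
    have := congrFun (congrFun hU i) j
    simpa [Matrix.mul_apply, Matrix.one_apply, Matrix.star_apply,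
      Matrix.IsHermitian.eigenvectorUnitary_apply] using this
  -- orthonormality (norms)
  have f2 : ∀ p, u p ⬝ᵥ u p = 1 := by
    intro p
    have ho := herm.eigenvectorBasis.orthonormal.1 p
    have h2 : (u p ⬝ᵥ u p) = ‖herm.eigenvectorBasis p‖ ^ 2 := by
      rw [← real_inner_self_eq_norm_sq]
      simp only [real_inner_self_eq_norm_sq, EuclideanSpace.real_norm_sq_eq, hudef, dotProduct]; simp only [pow_two]
    rw [h2, ho, one_pow]
  -- basis trace identity
  have htr : ∀ B : Matrix (Fin m) (Fin m) ℝ,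
      (∑ p, u p ⬝ᵥ (B *ᵥ u p)) = Matrix.trace B := by
    intro B
    calc (∑ p, u p ⬝ᵥ (B *ᵥ u p)) = ∑ p, ∑ i, ∑ j, B i j * (u p i * u p j) := by
          congr 1; ext p
          simp only [dotProduct, Matrix.mulVec, Finset.mul_sum]
          congr 1; ext i; congr 1; ext j; ring
      _ = ∑ i, ∑ j, B i j * ∑ p, (u p i * u p j) := by
          rw [Finset.sum_comm]
          congr 1; ext i
          rw [Finset.sum_comm]
          congr 1; ext j
          rw [← Finset.mul_sum]
      _ = ∑ i, B i i := by
          simp [f3, mul_ite]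
      _ = Matrix.trace B := rfl
  have hdot : ∀ (P Q : Matrix (Fin m) (Fin n) ℝ) (w : Fin m → ℝ),
      (Pᵀ *ᵥ w) ⬝ᵥ (Qᵀ *ᵥ w) = w ⬝ᵥ ((P * Qᵀ) *ᵥ w) := by
    intro P Q w
    rw [Matrix.mulVec_transpose P w, ← Matrix.dotProduct_mulVec, ← Matrix.mulVec_mulVec]
  set a : Fin m → Fin n → ℝ := fun p => Gᵀ *ᵥ u p with hadef
  set b : Fin m → Fin n → ℝ := fun p => Xᵀ *ᵥ u p with hbdef
  -- a p ⬝ᵥ a p = d p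
  have haa : ∀ p, a p ⬝ᵥ a p = d p := by
    intro p
    rw [hadef, hdot G G (u p), ← hAdef, f1, dotProduct_smul, smul_eq_mul, f2, mul_one]
  -- F1
  have F1 : Matrix.trace (Gᵀ * X) = ∑ p, a p ⬝ᵥ b p := by
    have h1 : ∀ p, a p ⬝ᵥ b p = u p ⬝ᵥ ((G * Xᵀ) *ᵥ u p) := fun p => hdot G X (u p)
    simp only [h1, htr]
    rw [← Matrix.trace_transpose (Gᵀ * X), Matrix.transpose_mul, Matrix.transpose_transpose,
      Matrix.trace_mul_comm]
  -- F3
  have F3 : Matrix.trace (Xᵀ * A * X) = ∑ p, d p * (b p ⬝ᵥ b p) := by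
    have h1 : ∀ p, d p * (b p ⬝ᵥ b p) = u p ⬝ᵥ ((A * (X * Xᵀ)) *ᵥ u p) := by
      intro p
      rw [hbdef, hdot X X (u p), ← smul_eq_mul, ← smul_dotProduct, ← f1]
      have h2 : A *ᵥ u p = u p ᵥ* A := by
        conv_lhs => rw [← hAt]
        rw [Matrix.mulVec_transpose]
      rw [h2, ← Matrix.dotProduct_mulVec, ← Matrix.mulVec_mulVec]
      rw [Matrix.mulVec_mulVec, Matrix.mulVec_mulVec, hAdef, Matrix.mul_assoc]
    simp only [h1, htr]
    rw [Matrix.trace_mul_comm, ← Matrix.mul_assoc, Matrix.trace_mul_cycle, Matrix.mul_assoc]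
  -- nonnegativity facts
  have hd0 : ∀ p, 0 ≤ d p := fun p => hApsd.eigenvalues_nonneg p
  have hbb0 : ∀ p, 0 ≤ b p ⬝ᵥ b p := by
    intro p
    exact Finset.sum_nonneg fun j _ => mul_self_nonneg _
  -- the set of nonzero eigenvalues
  set S : Finset (Fin m) := Finset.univ.filter (fun p => d p ≠ 0) with hSdef
  have hcard : (S.card : ℝ) ≤ (r : ℝ) := by
    have h1 : S.card = Fintype.card {p // d p ≠ 0} := (Fintype.card_subtype _).symm
    have h2 : A.rank = Fintype.card {p // d p ≠ 0} := herm.rank_eq_card_non_zero_eigs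
    have h3 : A.rank = G.rank := Matrix.rank_self_mul_transpose G
    have : S.card ≤ r := by omega
    exact_mod_cast this
  -- Cauchy-Schwarz for dot products
  have hCS : ∀ (v w : Fin n → ℝ), (v ⬝ᵥ w) ^ 2 ≤ (v ⬝ᵥ v) * (w ⬝ᵥ w) := by
    intro v w
    have := Finset.sum_mul_sq_le_sq_mul_sq Finset.univ v w
    simpa [dotProduct, pow_two] using this
  -- terms outside S vanish
  have hvanish : ∀ p, p ∉ S → a p ⬝ᵥ b p = 0 := by
    intro p hp
    have hd : d p = 0 := by
      by_contra hd
      exact hp (Finset.mem_filter.mpr ⟨Finset.mem_univ p, hd⟩)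
    have h1 : (a p ⬝ᵥ b p) ^ 2 ≤ 0 := by
      have := hCS (a p) (b p)
      rwa [haa, hd, zero_mul] at this
    have h2 : (a p ⬝ᵥ b p) ^ 2 = 0 := le_antisymm h1 (sq_nonneg _)
    exact pow_eq_zero_iff two_ne_zero |>.mp h2
  -- main chain
  have step1 : Matrix.trace (Gᵀ * X) = ∑ p ∈ S, a p ⬝ᵥ b p := by
    rw [F1, Finset.sum_subset (Finset.subset_univ S)]
    intro p _ hp
    exact hvanish p hp
  have step2 : (∑ p ∈ S, a p ⬝ᵥ b p) ^ 2 ≤ (S.card : ℝ) * ∑ p ∈ S, (a p ⬝ᵥ b p) ^ 2 := by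
    have h := Finset.sum_mul_sq_le_sq_mul_sq S (fun _ => (1:ℝ)) (fun p => a p ⬝ᵥ b p)
    simp only [one_mul, one_pow] at h
    calc (∑ p ∈ S, a p ⬝ᵥ b p) ^ 2 ≤ (∑ _p ∈ S, (1:ℝ)) * ∑ p ∈ S, (a p ⬝ᵥ b p) ^ 2 := h
      _ = (S.card : ℝ) * ∑ p ∈ S, (a p ⬝ᵥ b p) ^ 2 := by
          rw [Finset.sum_const, nsmul_eq_mul, mul_one]
  have step3 : (∑ p ∈ S, (a p ⬝ᵥ b p) ^ 2) ≤ ∑ p ∈ S, d p * (b p ⬝ᵥ b p) := by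
    apply Finset.sum_le_sum
    intro p _
    have := hCS (a p) (b p)
    rwa [haa] at this
  have step4 : (∑ p ∈ S, d p * (b p ⬝ᵥ b p)) ≤ Matrix.trace (Xᵀ * A * X) := by
    rw [F3]
    apply Finset.sum_le_sum_of_subset_of_nonneg (Finset.subset_univ S)
    intro p _ _
    exact mul_nonneg (hd0 p) (hbb0 p)
  have htrace0 : 0 ≤ Matrix.trace (Xᵀ * A * X) := by
    rw [F3]
    exact Finset.sum_nonneg fun p _ => mul_nonneg (hd0 p) (hbb0 p)
  have hsum2 : 0 ≤ ∑ p ∈ S, (a p ⬝ᵥ b p) ^ 2 := Finset.sum_nonneg fun p _ => sq_nonneg _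
  calc (Matrix.trace (Gᵀ * X)) ^ 2 = (∑ p ∈ S, a p ⬝ᵥ b p) ^ 2 := by rw [step1]
    _ ≤ (S.card : ℝ) * ∑ p ∈ S, (a p ⬝ᵥ b p) ^ 2 := step2
    _ ≤ (S.card : ℝ) * Matrix.trace (Xᵀ * A * X) := by
        apply mul_le_mul_of_nonneg_left _ (Nat.cast_nonneg _)
        exact le_trans step3 step4
    _ ≤ (r : ℝ) * Matrix.trace (Xᵀ * A * X) := by
        apply mul_le_mul_of_nonneg_right hcard htrace0

section quad
variable {m n : ℕ} (x : Fin m × Fin n → ℝ)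

private def XM (x : Fin m × Fin n → ℝ) : Matrix (Fin m) (Fin n) ℝ :=
  Matrix.of fun i j => x (i, j)

lemma qA (A : Matrix (Fin m) (Fin m) ℝ) :
    x ⬝ᵥ ((A ⊗ₖ (1 : Matrix (Fin n) (Fin n) ℝ)) *ᵥ x)
      = Matrix.trace ((XM x)ᵀ * A * (XM x)) := by
  simp only [Matrix.trace, Matrix.diag, Matrix.mul_apply, Matrix.transpose_apply,
    dotProduct, Matrix.mulVec, Matrix.kroneckerMap_apply, Matrix.one_apply, XM,
    Fintype.sum_prod_type, Matrix.of_apply, mul_ite, mul_zero, ite_mul, zero_mul,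
    Finset.sum_ite_eq, Finset.mem_univ, if_true, Finset.sum_mul, Finset.mul_sum]
  rw [Finset.sum_comm]
  congr 1; ext i
  rw [Finset.sum_comm]
  congr 1; ext j
  congr 1; ext k
  ring

lemma qB (B : Matrix (Fin n) (Fin n) ℝ) :
    x ⬝ᵥ (((1 : Matrix (Fin m) (Fin m) ℝ) ⊗ₖ B) *ᵥ x)
      = Matrix.trace ((XM x) * B * (XM x)ᵀ) := by
  have h1 : ∀ i j, ((((1 : Matrix (Fin m) (Fin m) ℝ) ⊗ₖ B) *ᵥ x) (i, j))
      = ∑ l, B j l * x (i, l) := by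
    intro i j
    simp only [Matrix.mulVec, dotProduct, Fintype.sum_prod_type, Matrix.kroneckerMap_apply,
      Matrix.one_apply, ite_mul, one_mul, zero_mul]
    rw [Finset.sum_comm]
    simp
  calc x ⬝ᵥ (((1 : Matrix (Fin m) (Fin m) ℝ) ⊗ₖ B) *ᵥ x)
      = ∑ i, ∑ j, x (i, j) * ∑ l, B j l * x (i, l) := by
        simp only [dotProduct, Fintype.sum_prod_type]
        apply Finset.sum_congr rfl; intro i _
        apply Finset.sum_congr rfl; intro j _
        rw [h1]
    _ = Matrix.trace ((XM x) * B * (XM x)ᵀ) := by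
        simp only [Matrix.trace, Matrix.diag, Matrix.mul_apply, Matrix.transpose_apply,
          XM, Matrix.of_apply, Finset.sum_mul, Finset.mul_sum]
        apply Finset.sum_congr rfl; intro i _
        rw [Finset.sum_comm]
        apply Finset.sum_congr rfl; intro j _
        apply Finset.sum_congr rfl; intro l _
        ring

lemma qg (G : Matrix (Fin m) (Fin n) ℝ) :
    _root_.vec G ⬝ᵥ x = Matrix.trace (Gᵀ * (XM x)) := by
  simp only [Matrix.trace, Matrix.diag, Matrix.mul_apply, Matrix.transpose_apply,
    dotProduct, _root_.vec, XM, Fintype.sum_prod_type, Matrix.of_apply]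
  rw [Finset.sum_comm]

lemma qvv (v : Fin m × Fin n → ℝ) :
    x ⬝ᵥ ((Matrix.vecMulVec v v) *ᵥ x) = (v ⬝ᵥ x) ^ 2 := by
  simp only [dotProduct, Matrix.mulVec, Matrix.vecMulVec_apply, pow_two,
    Finset.sum_mul, Finset.mul_sum]
  rw [Finset.sum_comm]
  congr 1; ext p
  congr 1; ext q
  ring

end quad

section key
variable {m n : ℕ}

lemma herm_kron' {k l : Type*} [Fintype k] [Fintype l]
    {A : Matrix k k ℝ} {B : Matrix l l ℝ}
    (hA : A.IsHermitian) (hB : B.IsHermitian) : (A ⊗ₖ B).IsHermitian := by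
  rw [Matrix.IsHermitian, conjTranspose_eq_transpose_of_trivial,
    ← Matrix.kroneckerMap_transpose]
  rw [Matrix.IsHermitian, conjTranspose_eq_transpose_of_trivial] at hA hB
  rw [hA, hB]

lemma herm_kron {A : Matrix (Fin m) (Fin m) ℝ} {B : Matrix (Fin n) (Fin n) ℝ}
    (hA : A.IsHermitian) (hB : B.IsHermitian) : (A ⊗ₖ B).IsHermitian :=
  herm_kron' hA hB

lemma herm_vv (v : Fin m × Fin n → ℝ) : (Matrix.vecMulVec v v).IsHermitian := by
  rw [Matrix.IsHermitian, conjTranspose_eq_transpose_of_trivial]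
  ext p q
  simp [Matrix.vecMulVec_apply, mul_comm]

lemma kron_psd {k l : Type*} [Fintype k] [Fintype l] [DecidableEq k] [DecidableEq l]
    {A : Matrix k k ℝ} {B : Matrix l l ℝ} (hA : A.PosSemidef) (hB : B.PosSemidef) :
    (A ⊗ₖ B).PosSemidef := by
  have ht : (hA.sqrt ⊗ₖ hB.sqrt)ᴴ = hA.sqrt ⊗ₖ hB.sqrt :=
    herm_kron' hA.posSemidef_sqrt.1 hB.posSemidef_sqrt.1
  have hsq : (hA.sqrt ⊗ₖ hB.sqrt)ᴴ * (hA.sqrt ⊗ₖ hB.sqrt) = A ⊗ₖ B := by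
    rw [ht, ← Matrix.mul_kronecker_mul, hA.sqrt_mul_self, hB.sqrt_mul_self]
  rw [← hsq]
  exact Matrix.posSemidef_conjTranspose_mul_self _

lemma keyA {r : ℕ} (G : Matrix (Fin m) (Fin n) ℝ) (h : G.rank ≤ r) :
    (((G * Gᵀ) ⊗ₖ (1 : Matrix (Fin n) (Fin n) ℝ))
      - ((r : ℝ)⁻¹) • Matrix.vecMulVec (_root_.vec G) (_root_.vec G)).PosSemidef := by
  have hermA : (G * Gᵀ).IsHermitian := by
    have := Matrix.posSemidef_self_mul_conjTranspose G
    rw [conjTranspose_eq_transpose_of_trivial] at this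
    exact this.1
  refine Matrix.PosSemidef.of_dotProduct_mulVec_nonneg ?_ ?_
  · apply (herm_kron hermA Matrix.isHermitian_one).sub
    rw [Matrix.IsHermitian, Matrix.conjTranspose_smul, star_trivial, herm_vv (_root_.vec G)]
  · intro x
    rw [star_trivial, Matrix.sub_mulVec, dotProduct_sub, Matrix.smul_mulVec,
      dotProduct_smul, qA, qvv, qg, sub_nonneg, smul_eq_mul]
    have hcore := core_ineq G (XM x) h
    rcases Nat.eq_zero_or_pos r with hr0 | hrpos
    · subst hr0
      simp only [Nat.cast_zero, zero_mul] at hcore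
      have h0 : Matrix.trace (Gᵀ * XM x) ^ 2 = 0 :=
        le_antisymm hcore (sq_nonneg _)
      rw [h0, mul_zero]
      have := qA x (G * Gᵀ)
      rw [← this]
      have hGGt : (G * Gᵀ).PosSemidef := by
        have := Matrix.posSemidef_self_mul_conjTranspose G
        rwa [conjTranspose_eq_transpose_of_trivial] at this
      have hpsd : ((G * Gᵀ) ⊗ₖ (1 : Matrix (Fin n) (Fin n) ℝ)).PosSemidef :=
        kron_psd hGGt Matrix.PosSemidef.one
      simpa using hpsd.dotProduct_mulVec_nonneg x
    · have hrinv : (0:ℝ) < (r:ℝ) := by exact_mod_cast hrpos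
      calc (r:ℝ)⁻¹ * Matrix.trace (Gᵀ * XM x) ^ 2
          ≤ (r:ℝ)⁻¹ * ((r:ℝ) * Matrix.trace ((XM x)ᵀ * (G * Gᵀ) * XM x)) := by
            apply mul_le_mul_of_nonneg_left hcore (inv_nonneg.mpr (le_of_lt hrinv))
        _ = Matrix.trace ((XM x)ᵀ * (G * Gᵀ) * XM x) := by
            field_simp
lemma keyB {r : ℕ} (G : Matrix (Fin m) (Fin n) ℝ) (h : G.rank ≤ r) :
    (((1 : Matrix (Fin m) (Fin m) ℝ) ⊗ₖ (Gᵀ * G))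
      - ((r : ℝ)⁻¹) • Matrix.vecMulVec (_root_.vec G) (_root_.vec G)).PosSemidef := by
  have hGtG : (Gᵀ * G).PosSemidef := by
    have := Matrix.posSemidef_conjTranspose_mul_self G
    rwa [conjTranspose_eq_transpose_of_trivial] at this
  have htr : ∀ X : Matrix (Fin m) (Fin n) ℝ,
      Matrix.trace (Gᵀ * X) = Matrix.trace (G * Xᵀ) := by
    intro X
    rw [← Matrix.trace_transpose (Gᵀ * X), Matrix.transpose_mul,
      Matrix.transpose_transpose, Matrix.trace_mul_comm]
  have hcore : ∀ X : Matrix (Fin m) (Fin n) ℝ,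
      (Matrix.trace (Gᵀ * X)) ^ 2 ≤ (r:ℝ) * Matrix.trace (X * (Gᵀ * G) * Xᵀ) := by
    intro X
    have h2 := core_ineq (r := r) Gᵀ Xᵀ
      (le_trans (le_of_eq (Matrix.rank_transpose G)) h)
    rw [Matrix.transpose_transpose, Matrix.transpose_transpose] at h2
    rw [htr X]
    exact h2
  refine Matrix.PosSemidef.of_dotProduct_mulVec_nonneg ?_ ?_
  · apply (herm_kron' Matrix.isHermitian_one hGtG.1).sub
    rw [Matrix.IsHermitian, Matrix.conjTranspose_smul, star_trivial, herm_vv (_root_.vec G)]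
  · intro x
    rw [star_trivial, Matrix.sub_mulVec, dotProduct_sub, Matrix.smul_mulVec,
      dotProduct_smul, qB, qvv, qg, sub_nonneg, smul_eq_mul]
    have hc := hcore (XM x)
    rcases Nat.eq_zero_or_pos r with hr0 | hrpos
    · subst hr0
      simp only [Nat.cast_zero, zero_mul] at hc
      have h0 : Matrix.trace (Gᵀ * XM x) ^ 2 = 0 := le_antisymm hc (sq_nonneg _)
      rw [h0, mul_zero]
      have := qB x (Gᵀ * G)
      rw [← this]
      have hpsd : ((1 : Matrix (Fin m) (Fin m) ℝ) ⊗ₖ (Gᵀ * G)).PosSemidef :=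
        kron_psd Matrix.PosSemidef.one hGtG
      simpa using hpsd.dotProduct_mulVec_nonneg x
    · have hrinv : (0:ℝ) < (r:ℝ) := by exact_mod_cast hrpos
      calc (r:ℝ)⁻¹ * Matrix.trace (Gᵀ * XM x) ^ 2
          ≤ (r:ℝ)⁻¹ * ((r:ℝ) * Matrix.trace ((XM x) * (Gᵀ * G) * (XM x)ᵀ)) := by
            apply mul_le_mul_of_nonneg_left hc (inv_nonneg.mpr (le_of_lt hrinv))
        _ = Matrix.trace ((XM x) * (Gᵀ * G) * (XM x)ᵀ) := by
            field_simp

end key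

section helpers2
variable {k : Type*} [Fintype k] [DecidableEq k]

lemma psd_sum {ι : Type*} (s : Finset ι) (f : ι → Matrix k k ℝ)
    (h : ∀ i ∈ s, (f i).PosSemidef) : (∑ i ∈ s, f i).PosSemidef := by
  classical
  induction s using Finset.induction_on with
  | empty => simpa using Matrix.PosSemidef.zero
  | insert _ _ hx ih =>
    rw [Finset.sum_insert hx]
    exact ((h _ (Finset.mem_insert_self _ _)).add
      (ih fun i hi => h i (Finset.mem_insert_of_mem hi)))

lemma psd_smul {c : ℝ} (hc : 0 ≤ c) {A : Matrix k k ℝ} (hA : A.PosSemidef) :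
    (c • A).PosSemidef := by
  refine Matrix.PosSemidef.of_dotProduct_mulVec_nonneg ?_ ?_
  · rw [Matrix.IsHermitian, Matrix.conjTranspose_smul, star_trivial, hA.1]
  · intro x
    rw [Matrix.smul_mulVec, dotProduct_smul, smul_eq_mul]
    exact mul_nonneg hc (hA.dotProduct_mulVec_nonneg x)

lemma psd_smul_one {c : ℝ} (hc : 0 < c) : ((c • 1 : Matrix k k ℝ)).PosDef := by
  rw [Matrix.smul_one_eq_diagonal]
  exact Matrix.PosDef.diagonal (fun _ => hc)

lemma sum_kronecker_right {ι : Type*} {l : Type*} [Fintype l] (s : Finset ι)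
    (A : ι → Matrix k k ℝ) (B : Matrix l l ℝ) :
    (∑ t ∈ s, A t) ⊗ₖ B = ∑ t ∈ s, (A t ⊗ₖ B) := by
  ext p q
  simp [Matrix.kroneckerMap_apply, Matrix.sum_apply, Finset.sum_mul]

lemma sum_kronecker_left {ι : Type*} {l : Type*} [Fintype l] (s : Finset ι)
    (A : Matrix k k ℝ) (B : ι → Matrix l l ℝ) :
    A ⊗ₖ (∑ t ∈ s, B t) = ∑ t ∈ s, (A ⊗ₖ B t) := by
  ext p q
  simp [Matrix.kroneckerMap_apply, Matrix.sum_apply, Finset.mul_sum]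

end helpers2

/-- Shampoo's upper bound (Gupta–Koren–Singer): if each `G t` has rank at most
`r`, then `ε I + (1/r) ∑ₜ gₜ gₜᵀ ≼ (ε I + ∑ₜ Gₜ Gₜᵀ)^{1/2} ⊗ (ε I + ∑ₜ Gₜᵀ Gₜ)^{1/2}`
in the Loewner order (stated as: the difference is positive semidefinite). -/
theorem shampoo_adagrad_bound {m n T : ℕ} (r : ℕ) (hr : 0 < r) (ε : ℝ) (hε : 0 < ε)
    (G : Fin T → Matrix (Fin m) (Fin n) ℝ) (hrank : ∀ t, (G t).rank ≤ r)
    (hL : (ε • (1 : Matrix (Fin m) (Fin m) ℝ) + ∑ t, G t * (G t)ᵀ).PosSemidef)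
    (hR : (ε • (1 : Matrix (Fin n) (Fin n) ℝ) + ∑ t, (G t)ᵀ * G t).PosSemidef) :
    (hL.sqrt ⊗ₖ hR.sqrt -
      (ε • (1 : Matrix (Fin m × Fin n) (Fin m × Fin n) ℝ) +
        (r : ℝ)⁻¹ • ∑ t, vecMulVec (_root_.vec (G t)) (_root_.vec (G t)))).PosSemidef := by
  classical
  set L : Matrix (Fin m) (Fin m) ℝ := ε • 1 + ∑ t, G t * (G t)ᵀ with hLdef
  set R : Matrix (Fin n) (Fin n) ℝ := ε • 1 + ∑ t, (G t)ᵀ * G t with hRdef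
  set M : Matrix (Fin m × Fin n) (Fin m × Fin n) ℝ :=
    ε • 1 + (r : ℝ)⁻¹ • ∑ t, vecMulVec (_root_.vec (G t)) (_root_.vec (G t)) with hMdef
  have hrinv : (0:ℝ) ≤ (r:ℝ)⁻¹ := inv_nonneg.mpr (Nat.cast_nonneg r)
  -- M is PSD
  have hMpsd : M.PosSemidef := by
    apply Matrix.PosSemidef.add
    · exact (psd_smul_one hε).posSemidef
    · apply psd_smul hrinv
      apply psd_sum
      intro t _
      exact Matrix.PosSemidef.of_dotProduct_mulVec_nonneg (herm_vv _) fun x => by rw [star_trivial, qvv]; exact sq_nonneg _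
  -- step A : L ⊗ 1 - M and 1 ⊗ R - M are PSD
  have hXM : (L ⊗ₖ (1 : Matrix (Fin n) (Fin n) ℝ) - M).PosSemidef := by
    have hdist : L ⊗ₖ (1 : Matrix (Fin n) (Fin n) ℝ)
        = ε • 1 + ∑ t, ((G t * (G t)ᵀ) ⊗ₖ (1 : Matrix (Fin n) (Fin n) ℝ)) := by
      rw [hLdef, Matrix.add_kronecker, Matrix.smul_kronecker,
        Matrix.one_kronecker_one, sum_kronecker_right]
    have heq : L ⊗ₖ (1 : Matrix (Fin n) (Fin n) ℝ) - M
        = ∑ t, (((G t * (G t)ᵀ) ⊗ₖ (1 : Matrix (Fin n) (Fin n) ℝ))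
            - (r : ℝ)⁻¹ • vecMulVec (_root_.vec (G t)) (_root_.vec (G t))) := by
      rw [hdist, hMdef, Finset.smul_sum, Finset.sum_sub_distrib]
      abel
    rw [heq]
    exact psd_sum _ _ fun t _ => keyA (G t) (hrank t)
  have hYM : ((1 : Matrix (Fin m) (Fin m) ℝ) ⊗ₖ R - M).PosSemidef := by
    have hdist : (1 : Matrix (Fin m) (Fin m) ℝ) ⊗ₖ R
        = ε • 1 + ∑ t, ((1 : Matrix (Fin m) (Fin m) ℝ) ⊗ₖ ((G t)ᵀ * G t)) := by
      rw [hRdef, Matrix.kronecker_add, Matrix.kronecker_smul,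
        Matrix.one_kronecker_one, sum_kronecker_left]
    have heq : (1 : Matrix (Fin m) (Fin m) ℝ) ⊗ₖ R - M
        = ∑ t, (((1 : Matrix (Fin m) (Fin m) ℝ) ⊗ₖ ((G t)ᵀ * G t))
            - (r : ℝ)⁻¹ • vecMulVec (_root_.vec (G t)) (_root_.vec (G t))) := by
      rw [hdist, hMdef, Finset.smul_sum, Finset.sum_sub_distrib]
      abel
    rw [heq]
    exact psd_sum _ _ fun t _ => keyB (G t) (hrank t)
  -- invertibility of the square roots
  have hLpd : L.PosDef := by
    apply Matrix.PosDef.add_posSemidef (psd_smul_one hε)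
    apply psd_sum
    intro t _
    have := Matrix.posSemidef_self_mul_conjTranspose (G t)
    rwa [conjTranspose_eq_transpose_of_trivial] at this
  have hRpd : R.PosDef := by
    apply Matrix.PosDef.add_posSemidef (psd_smul_one hε)
    apply psd_sum
    intro t _
    have := Matrix.posSemidef_conjTranspose_mul_self (G t)
    rwa [conjTranspose_eq_transpose_of_trivial] at this
  set SL := hL.sqrt with hSLdef
  set SR := hR.sqrt with hSRdef
  have hSL : SL.PosSemidef := hL.posSemidef_sqrt
  have hSR : SR.PosSemidef := hR.posSemidef_sqrt
  have hSLmul : SL * SL = L := hL.sqrt_mul_self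
  have hSRmul : SR * SR = R := hR.sqrt_mul_self
  have hdetSL : IsUnit SL.det := by
    have hdl : 0 < L.det := hLpd.det_pos
    rw [← hSLmul, Matrix.det_mul] at hdl
    have : SL.det ≠ 0 := fun h => by rw [h, mul_zero] at hdl; exact lt_irrefl 0 hdl
    exact isUnit_iff_ne_zero.mpr this
  have hSLt : SLᵀ = SL := by
    rw [← conjTranspose_eq_transpose_of_trivial, hSL.1]
  have hSLinvt : (SL⁻¹)ᵀ = SL⁻¹ := by
    rw [Matrix.transpose_nonsing_inv, hSLt]
  have hSLinvpsd : (SL⁻¹).PosSemidef := hSL.inv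
  -- the conjugating matrices
  set W : Matrix (Fin m × Fin n) (Fin m × Fin n) ℝ := SL⁻¹ ⊗ₖ (1 : Matrix (Fin n) (Fin n) ℝ)
    with hWdef
  set W' : Matrix (Fin m × Fin n) (Fin m × Fin n) ℝ := SL ⊗ₖ (1 : Matrix (Fin n) (Fin n) ℝ)
    with hW'def
  have hWt : Wᵀ = W := by
    rw [hWdef, ← Matrix.kroneckerMap_transpose, hSLinvt, Matrix.transpose_one]
  have hW't : W'ᵀ = W' := by
    rw [hW'def, ← Matrix.kroneckerMap_transpose, hSLt, Matrix.transpose_one]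
  have hWW' : W * W' = 1 := by
    rw [hWdef, hW'def, ← Matrix.mul_kronecker_mul, Matrix.nonsing_inv_mul _ hdetSL,
      Matrix.one_mul, Matrix.one_kronecker_one]
  have hW'W : W' * W = 1 := by
    rw [hWdef, hW'def, ← Matrix.mul_kronecker_mul, Matrix.mul_nonsing_inv _ hdetSL,
      Matrix.one_mul, Matrix.one_kronecker_one]
  set N := W * M * W with hNdef
  set C : Matrix (Fin m × Fin n) (Fin m × Fin n) ℝ := SL⁻¹ ⊗ₖ SR with hCdef
  have hNpsd : N.PosSemidef := by
    have := hMpsd.conjTranspose_mul_mul_same W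
    rwa [conjTranspose_eq_transpose_of_trivial, hWt] at this
  have hCpsd : C.PosSemidef := kron_psd hSLinvpsd hSR
  have h1N : ((1 : Matrix (Fin m × Fin n) (Fin m × Fin n) ℝ) - N).PosSemidef := by
    have hc := conj_mono hWt hXM
    have hWLW : W * (L ⊗ₖ (1 : Matrix (Fin n) (Fin n) ℝ)) * W = 1 := by
      rw [hWdef, ← Matrix.mul_kronecker_mul, ← Matrix.mul_kronecker_mul,
        Matrix.one_mul, Matrix.one_mul, ← hSLmul, ← Matrix.mul_assoc,
        Matrix.nonsing_inv_mul _ hdetSL, Matrix.one_mul,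
        Matrix.mul_nonsing_inv _ hdetSL, Matrix.one_kronecker_one]
    rwa [hWLW] at hc
  have hCCN : (C * C - N).PosSemidef := by
    have hc := conj_mono hWt hYM
    have hWRW : W * ((1 : Matrix (Fin m) (Fin m) ℝ) ⊗ₖ R) * W
        = C * C := by
      rw [hWdef, hCdef, ← Matrix.mul_kronecker_mul, ← Matrix.mul_kronecker_mul,
        ← Matrix.mul_kronecker_mul, Matrix.mul_one, Matrix.one_mul, hSRmul,
        Matrix.mul_one]
    rwa [hWRW] at hc
  have hCN : (C - N).PosSemidef := crux hNpsd hCpsd h1N hCCN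
  -- conjugate back
  have hfinal := conj_mono hW't hCN
  have hW'CW' : W' * C * W' = SL ⊗ₖ SR := by
    rw [hW'def, hCdef, ← Matrix.mul_kronecker_mul, ← Matrix.mul_kronecker_mul,
      Matrix.one_mul, Matrix.mul_one, Matrix.mul_nonsing_inv _ hdetSL, Matrix.one_mul]
  have hW'NW' : W' * N * W' = M := by
    rw [hNdef, ← Matrix.mul_assoc, ← Matrix.mul_assoc, hW'W, Matrix.one_mul,
      Matrix.mul_assoc, hWW', Matrix.mul_one]
  rwa [hW'CW', hW'NW'] at hfinal
end

section
/- Let H ∈ ℝ^{mn×mn} be symmetric positive semidefinite, and let R̂(H) ∈ ℝ^{m²×n²} be its rearrangement. If u₁ ∈ ℝ^{m²} and v₁ ∈ ℝ^{n²} are the top left and right singular vectors of R̂(H) (corresponding to its largest singular value σ₁ > 0), then the n×n matrix V₁ with vec(V₁) = v₁ can be chosen to be positive semidefinite (i.e., after an appropriate choice of sign, V₁ is symmetric PSD). -/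
open Matrix Kronecker
open scoped ComplexOrder

open scoped MatrixOrder in
theorem Matrix.posSemidef_iff_eq_transpose_mul_self {k : Type*} [Fintype k] [DecidableEq k]
    {𝕜 : Type*} [RCLike 𝕜] {A : Matrix k k 𝕜} : A.PosSemidef ↔ ∃ B : Matrix k k 𝕜, A = Bᴴ * B := by
  constructor
  · intro hA
    obtain ⟨X, hX, -, hXX⟩ := CFC.exists_sqrt_of_isSelfAdjoint_of_quasispectrumRestricts
      hA.isHermitian (QuasispectrumRestricts.nnreal_of_nonneg hA.nonneg)
    exact ⟨X, by rw [← hXX, ← Matrix.star_eq_conjTranspose, hX.star_eq]⟩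
  · rintro ⟨B, rfl⟩
    exact Matrix.posSemidef_conjTranspose_mul_self B

namespace VLP1

variable {m n : ℕ}

/-! ### The complexified map `Ψ` and basic quantities -/

noncomputable def cPsi (H : Matrix (Fin m × Fin n) (Fin m × Fin n) ℝ)
    (M : Matrix (Fin n) (Fin n) ℂ) : Matrix (Fin m) (Fin m) ℂ :=
  Matrix.of fun p₁ p₂ => ∑ q₁, ∑ q₂, (H (p₁,q₁) (p₂,q₂) : ℂ) * M q₁ q₂

noncomputable def EN (M : Matrix (Fin n) (Fin n) ℂ) : ℝ :=
  ∑ q : Fin n × Fin n, Complex.normSq (M q.1 q.2)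

noncomputable def EP (H : Matrix (Fin m × Fin n) (Fin m × Fin n) ℝ)
    (M : Matrix (Fin n) (Fin n) ℂ) : ℝ :=
  ∑ p : Fin m × Fin m, Complex.normSq (cPsi H M p.1 p.2)

def reM (M : Matrix (Fin n) (Fin n) ℂ) : Matrix (Fin n) (Fin n) ℝ :=
  Matrix.of fun i j => (M i j).re
def imM (M : Matrix (Fin n) (Fin n) ℂ) : Matrix (Fin n) (Fin n) ℝ :=
  Matrix.of fun i j => (M i j).im

theorem cPsi_apply_re (H : Matrix (Fin m × Fin n) (Fin m × Fin n) ℝ)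
    (M : Matrix (Fin n) (Fin n) ℂ) (p : Fin m × Fin m) :
    (cPsi H M p.1 p.2).re = ((rearrange H) *ᵥ _root_.vec (reM M)) p := by
  simp [cPsi, rearrange, _root_.vec, reM, Matrix.mulVec, dotProduct,
    Fintype.sum_prod_type, Complex.re_sum]

theorem cPsi_apply_im (H : Matrix (Fin m × Fin n) (Fin m × Fin n) ℝ)
    (M : Matrix (Fin n) (Fin n) ℂ) (p : Fin m × Fin m) :
    (cPsi H M p.1 p.2).im = ((rearrange H) *ᵥ _root_.vec (imM M)) p := by
  simp [cPsi, rearrange, _root_.vec, imM, Matrix.mulVec, dotProduct,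
    Fintype.sum_prod_type, Complex.im_sum]

theorem EN_eq (M : Matrix (Fin n) (Fin n) ℂ) :
    EN M = (∑ q : Fin n × Fin n, (_root_.vec (reM M)) q ^ 2) +
      (∑ q : Fin n × Fin n, (_root_.vec (imM M)) q ^ 2) := by
  rw [EN, ← Finset.sum_add_distrib]
  refine Finset.sum_congr rfl fun q _ => ?_
  simp [Complex.normSq_apply, _root_.vec, reM, imM, sq]

theorem EP_eq (H : Matrix (Fin m × Fin n) (Fin m × Fin n) ℝ)
    (M : Matrix (Fin n) (Fin n) ℂ) :
    EP H M = (∑ p : Fin m × Fin m, ((rearrange H) *ᵥ _root_.vec (reM M)) p ^ 2) +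
      (∑ p : Fin m × Fin m, ((rearrange H) *ᵥ _root_.vec (imM M)) p ^ 2) := by
  rw [EP, ← Finset.sum_add_distrib]
  refine Finset.sum_congr rfl fun p _ => ?_
  rw [← cPsi_apply_re, ← cPsi_apply_im]
  simp [Complex.normSq_apply, sq]

/-! ### `Ψ` is completely positive -/

def kraus (G : Matrix (Fin m × Fin n) (Fin m × Fin n) ℝ) (t : Fin m × Fin n) :
    Matrix (Fin m) (Fin n) ℂ :=
  Matrix.of fun p q => (G t (p, q) : ℂ)

theorem sum_swap3 {α β γ M : Type*} [Fintype α] [Fintype β] [Fintype γ]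
    [AddCommMonoid M] (f : α → β → γ → M) :
    ∑ a, ∑ b, ∑ c, f a b c = ∑ c, ∑ b, ∑ a, f a b c := by
  calc ∑ a, ∑ b, ∑ c, f a b c
      = ∑ a, ∑ c, ∑ b, f a b c := Finset.sum_congr rfl fun a _ => Finset.sum_comm
    _ = ∑ c, ∑ a, ∑ b, f a b c := Finset.sum_comm
    _ = ∑ c, ∑ b, ∑ a, f a b c := Finset.sum_congr rfl fun c _ => Finset.sum_comm

theorem cPsi_eq_sum {H G : Matrix (Fin m × Fin n) (Fin m × Fin n) ℝ}
    (hG : ∀ a b, H a b = ∑ t, G t a * G t b) (M : Matrix (Fin n) (Fin n) ℂ) :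
    cPsi H M = ∑ t, kraus G t * M * (kraus G t)ᴴ := by
  ext p₁ p₂
  simp only [cPsi, Matrix.of_apply, Matrix.sum_apply, Matrix.mul_apply,
    Matrix.conjTranspose_apply, kraus, Complex.star_def, Finset.sum_mul, Finset.mul_sum]
  rw [sum_swap3 (fun t q₂ q₁ => (G t (p₁, q₁) : ℂ) * M q₁ q₂ * (starRingEnd ℂ) (G t (p₂, q₂) : ℂ))]
  refine Finset.sum_congr rfl fun q₁ _ => Finset.sum_congr rfl fun q₂ _ => ?_
  rw [hG]
  push_cast
  rw [Finset.sum_mul]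
  refine Finset.sum_congr rfl fun t _ => ?_
  rw [Complex.conj_ofReal]
  ring

theorem exists_gram {H : Matrix (Fin m × Fin n) (Fin m × Fin n) ℝ} (hH : H.PosSemidef) :
    ∃ G : Matrix (Fin m × Fin n) (Fin m × Fin n) ℝ, ∀ a b, H a b = ∑ t, G t a * G t b := by
  obtain ⟨B, hB⟩ := Matrix.posSemidef_iff_eq_transpose_mul_self.mp hH
  exact ⟨B, fun a b => by simp [hB, Matrix.mul_apply, Matrix.conjTranspose_apply]⟩

theorem cPsi_posSemidef {H : Matrix (Fin m × Fin n) (Fin m × Fin n) ℝ} (hH : H.PosSemidef)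
    {M : Matrix (Fin n) (Fin n) ℂ} (hM : M.PosSemidef) : (cPsi H M).PosSemidef := by
  obtain ⟨G, hG⟩ := exists_gram hH
  rw [cPsi_eq_sum hG]
  refine Finset.sum_induction _ _ (fun a b ha hb => ha.add hb) ?_ ?_
  · simpa using Matrix.PosSemidef.zero
  · exact fun t _ => hM.mul_mul_conjTranspose_same _

/-! ### Frobenius inner product facts -/

theorem frob_eq_trace {k : ℕ} (A B : Matrix (Fin k) (Fin k) ℂ) :
    ∑ i, ∑ j, (starRingEnd ℂ) (A i j) * B i j = (Aᴴ * B).trace := by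
  rw [Matrix.trace]
  simp only [Matrix.diag_apply, Matrix.mul_apply, Matrix.conjTranspose_apply, Complex.star_def]
  exact Finset.sum_comm

theorem cross_nonneg {k : ℕ} {A B : Matrix (Fin k) (Fin k) ℂ}
    (hA : A.PosSemidef) (hB : B.PosSemidef) :
    0 ≤ (∑ i, ∑ j, (starRingEnd ℂ) (A i j) * B i j).re := by
  rw [frob_eq_trace, hA.1]
  obtain ⟨C, hC⟩ := Matrix.posSemidef_iff_eq_transpose_mul_self.mp hA
  obtain ⟨D, hD⟩ := Matrix.posSemidef_iff_eq_transpose_mul_self.mp hB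
  have h : (A * B).trace = ((C * Dᴴ)ᴴ * (C * Dᴴ)).trace := by
    rw [hC, hD]
    rw [Matrix.conjTranspose_mul, Matrix.conjTranspose_conjTranspose]
    conv_rhs => rw [show D * Cᴴ * (C * Dᴴ) = D * (Cᴴ * (C * Dᴴ)) from Matrix.mul_assoc _ _ _,
      Matrix.trace_mul_comm]
    simp only [Matrix.mul_assoc]
  rw [h, ← frob_eq_trace]
  have : ∀ i j : Fin k, (starRingEnd ℂ) ((C * Dᴴ) i j) * (C * Dᴴ) i j
      = (Complex.normSq ((C * Dᴴ) i j) : ℂ) := fun i j => Complex.normSq_eq_conj_mul_self.symm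
  simp only [this]
  simp only [Complex.re_sum, Complex.ofReal_re]
  exact Finset.sum_nonneg fun i _ => Finset.sum_nonneg fun j _ => Complex.normSq_nonneg _

theorem cross_zero {k : ℕ} {A B : Matrix (Fin k) (Fin k) ℂ}
    (hA : A.IsHermitian) (hAB : A * B = 0) :
    ∑ i, ∑ j, (starRingEnd ℂ) (A i j) * B i j = 0 := by
  rw [frob_eq_trace, hA, hAB, Matrix.trace_zero]

/-! ### Spectral splitting of a Hermitian matrix -/

theorem spectral_split {k : ℕ} {M : Matrix (Fin k) (Fin k) ℂ} (hM : M.IsHermitian) :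
    ∃ P Q : Matrix (Fin k) (Fin k) ℂ, P.PosSemidef ∧ Q.PosSemidef ∧ P - Q = M ∧ P * Q = 0 ∧
      (M ≠ 0 → 0 < (P + Q).trace.re) := by
  set U : Matrix (Fin k) (Fin k) ℂ := (Matrix.IsHermitian.eigenvectorUnitary hM : Matrix (Fin k) (Fin k) ℂ) with hU
  have hU1 : star U * U = 1 := Matrix.mem_unitaryGroup_iff'.mp (Matrix.IsHermitian.eigenvectorUnitary hM).2
  have hU2 : U * star U = 1 := Matrix.mem_unitaryGroup_iff.mp (Matrix.IsHermitian.eigenvectorUnitary hM).2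
  set μ : Fin k → ℝ := hM.eigenvalues with hμ
  set P : Matrix (Fin k) (Fin k) ℂ := U * Matrix.diagonal (fun i => ((max (μ i) 0 : ℝ) : ℂ)) * star U with hP
  set Q : Matrix (Fin k) (Fin k) ℂ := U * Matrix.diagonal (fun i => ((max (-μ i) 0 : ℝ) : ℂ)) * star U with hQ
  have hdiagPSD : ∀ d : Fin k → ℝ, (∀ i, 0 ≤ d i) →
      (U * Matrix.diagonal (fun i => (d i : ℂ)) * star U).PosSemidef := by
    intro d hd
    rw [Matrix.star_eq_conjTranspose]
    exact (Matrix.posSemidef_diagonal_iff.mpr fun i => by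
      simpa using Complex.zero_le_real.mpr (hd i)).mul_mul_conjTranspose_same U
  refine ⟨P, Q, hdiagPSD _ (fun i => le_max_right _ _), hdiagPSD _ (fun i => le_max_right _ _),
    ?_, ?_, ?_⟩
  · rw [hP, hQ, ← Matrix.sub_mul, ← Matrix.mul_sub, Matrix.diagonal_sub]
    have : (fun i => ((max (μ i) 0 : ℝ) : ℂ) - ((max (-μ i) 0 : ℝ) : ℂ)) = fun i => (μ i : ℂ) := by
      funext i
      rw [← Complex.ofReal_sub, max_zero_sub_max_neg_zero_eq_self]
    rw [this]
    exact (hM.spectral_theorem).symm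
  · have hDD : Matrix.diagonal (fun i => ((max (μ i) 0 : ℝ) : ℂ)) *
        Matrix.diagonal (fun i => ((max (-μ i) 0 : ℝ) : ℂ)) = 0 := by
      rw [Matrix.diagonal_mul_diagonal]
      have : (fun i => ((max (μ i) 0 : ℝ) : ℂ) * ((max (-μ i) 0 : ℝ) : ℂ)) = fun _ => (0 : ℂ) := by
        funext i
        rw [← Complex.ofReal_mul]
        rcases le_total (μ i) 0 with h | h
        · rw [max_eq_right h]; simp
        · rw [max_eq_right (by linarith : -μ i ≤ 0)]; simp
      rw [this, Matrix.diagonal_zero]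
    calc P * Q = U * (Matrix.diagonal (fun i => ((max (μ i) 0 : ℝ) : ℂ)) * (star U * U) *
          Matrix.diagonal (fun i => ((max (-μ i) 0 : ℝ) : ℂ))) * star U := by
          simp only [hP, hQ, Matrix.mul_assoc]
      _ = 0 := by rw [hU1]; simp [hDD, Matrix.mul_assoc]
  · intro hM0
    have hPQ : P + Q = U * Matrix.diagonal (fun i => ((|μ i| : ℝ) : ℂ)) * star U := by
      rw [hP, hQ, ← Matrix.add_mul, ← Matrix.mul_add, Matrix.diagonal_add]
      have : (fun i => ((max (μ i) 0 : ℝ) : ℂ) + ((max (-μ i) 0 : ℝ) : ℂ))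
          = fun i => ((|μ i| : ℝ) : ℂ) := by
        funext i
        rw [← Complex.ofReal_add]
        congr 1
        rcases le_total (μ i) 0 with h | h
        · rw [max_eq_right h, max_eq_left (by linarith), abs_of_nonpos h]; ring
        · rw [max_eq_left h, max_eq_right (by linarith), abs_of_nonneg h]; ring
      rw [this]
    have htr : (P + Q).trace = ∑ i, ((|μ i| : ℝ) : ℂ) := by
      rw [hPQ, Matrix.trace_mul_cycle, hU1, Matrix.one_mul, Matrix.trace_diagonal]
    rw [htr]
    have : (∑ i, ((|μ i| : ℝ) : ℂ)).re = ∑ i, |μ i| := by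
      rw [← Complex.ofReal_sum, Complex.ofReal_re]
    rw [this]
    have hne : ∃ i, μ i ≠ 0 := by
      by_contra hc
      push_neg at hc
      apply hM0
      have : Matrix.diagonal (RCLike.ofReal ∘ μ) = (0 : Matrix (Fin k) (Fin k) ℂ) := by
        have : (RCLike.ofReal ∘ μ : Fin k → ℂ) = fun _ => 0 := by
          funext i; simp [hc i]
        rw [this, Matrix.diagonal_zero]
      rw [hM.spectral_theorem, this]
      simp
    obtain ⟨i, hi⟩ := hne
    exact Finset.sum_pos' (fun j _ => abs_nonneg _) ⟨i, Finset.mem_univ i, abs_pos.mpr hi⟩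

/-! ### Real eigenvector extraction from attained top singular value -/

theorem quad_id (H : Matrix (Fin m × Fin n) (Fin m × Fin n) ℝ) (x : Fin n × Fin n → ℝ) :
    x ⬝ᵥ (((rearrange H)ᵀ * (rearrange H)) *ᵥ x) = ∑ p, ((rearrange H) *ᵥ x) p ^ 2 := by
  rw [← Matrix.mulVec_mulVec, Matrix.dotProduct_mulVec, Matrix.vecMul_transpose,
    dotProduct]
  exact Finset.sum_congr rfl fun p _ => (sq _).symm

theorem eig_lemma {H : Matrix (Fin m × Fin n) (Fin m × Fin n) ℝ} {σ : ℝ}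
    (htop : ∀ x : Fin n × Fin n → ℝ,
      ∑ p, ((rearrange H) *ᵥ x) p ^ 2 ≤ σ ^ 2 * ∑ q, x q ^ 2)
    {w : Fin n × Fin n → ℝ}
    (hw : ∑ p, ((rearrange H) *ᵥ w) p ^ 2 = σ ^ 2 * ∑ q, w q ^ 2) :
    (rearrange H)ᵀ *ᵥ ((rearrange H) *ᵥ w) = σ ^ 2 • w := by
  set R := rearrange H with hR
  set B : Matrix (Fin n × Fin n) (Fin n × Fin n) ℝ := σ ^ 2 • (1 : Matrix _ _ ℝ) - Rᵀ * R with hB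
  have hBv : ∀ x : Fin n × Fin n → ℝ, B *ᵥ x = σ ^ 2 • x - (Rᵀ * R) *ᵥ x := by
    intro x
    rw [hB, Matrix.sub_mulVec, Matrix.smul_mulVec, Matrix.one_mulVec]
  have hquad : ∀ x : Fin n × Fin n → ℝ, x ⬝ᵥ B *ᵥ x = σ ^ 2 * ∑ q, x q ^ 2 - ∑ p, (R *ᵥ x) p ^ 2 := by
    intro x
    rw [hBv, dotProduct_sub, quad_id, dotProduct_smul]
    congr 1
    rw [smul_eq_mul, dotProduct]
    congr 1
    exact Finset.sum_congr rfl fun q _ => (sq _).symm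
  have hBpsd : B.PosSemidef := by
    rw [Matrix.posSemidef_iff_dotProduct_mulVec]
    constructor
    · rw [hB, Matrix.IsHermitian, Matrix.conjTranspose_eq_transpose_of_trivial,
        Matrix.transpose_sub, Matrix.transpose_smul, Matrix.transpose_one,
        Matrix.transpose_mul, Matrix.transpose_transpose]
    · intro x
      rw [show star x = x from funext fun q => star_trivial _, hquad]
      linarith [htop x]
  have h0 : star w ⬝ᵥ B *ᵥ w = 0 := by
    rw [show star w = w from funext fun q => star_trivial _, hquad, hw]
    ring
  have hBw : B *ᵥ w = 0 := (hBpsd.dotProduct_mulVec_zero_iff w).mp h0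
  rw [hBv] at hBw
  rw [Matrix.mulVec_mulVec]
  exact (sub_eq_zero.mp hBw).symm

/-! ### Expansion identities -/

theorem normSq_add_eq (a b : ℂ) :
    Complex.normSq (a + b) = Complex.normSq (a - b) + 4 * ((starRingEnd ℂ) a * b).re := by
  simp only [Complex.normSq_apply, Complex.add_re, Complex.add_im, Complex.sub_re,
    Complex.sub_im, Complex.mul_re, Complex.mul_im, Complex.conj_re, Complex.conj_im]
  ring

theorem cPsi_add (H : Matrix (Fin m × Fin n) (Fin m × Fin n) ℝ)
    (P Q : Matrix (Fin n) (Fin n) ℂ) : cPsi H (P + Q) = cPsi H P + cPsi H Q := by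
  ext p₁ p₂
  simp [cPsi, Matrix.add_apply, mul_add, Finset.sum_add_distrib]

theorem cPsi_sub (H : Matrix (Fin m × Fin n) (Fin m × Fin n) ℝ)
    (P Q : Matrix (Fin n) (Fin n) ℂ) : cPsi H (P - Q) = cPsi H P - cPsi H Q := by
  ext p₁ p₂
  simp [cPsi, Matrix.sub_apply, mul_sub, Finset.sum_sub_distrib]

theorem EP_expand (H : Matrix (Fin m × Fin n) (Fin m × Fin n) ℝ)
    (P Q : Matrix (Fin n) (Fin n) ℂ) :
    EP H (P + Q) = EP H (P - Q) +
      4 * (∑ i, ∑ j, (starRingEnd ℂ) (cPsi H P i j) * cPsi H Q i j).re := by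
  rw [EP, EP, cPsi_add, cPsi_sub]
  have h : ∀ p : Fin m × Fin m,
      Complex.normSq ((cPsi H P + cPsi H Q) p.1 p.2)
        = Complex.normSq ((cPsi H P - cPsi H Q) p.1 p.2)
          + 4 * ((starRingEnd ℂ) (cPsi H P p.1 p.2) * cPsi H Q p.1 p.2).re := fun p => by
    simpa [Matrix.add_apply, Matrix.sub_apply] using
      normSq_add_eq (cPsi H P p.1 p.2) (cPsi H Q p.1 p.2)
  rw [Finset.sum_congr rfl fun p _ => h p, Finset.sum_add_distrib]
  congr 1
  rw [← Finset.mul_sum]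
  congr 1
  simp [Complex.re_sum, Fintype.sum_prod_type]

theorem EN_expand (P Q : Matrix (Fin n) (Fin n) ℂ) :
    EN (P + Q) = EN (P - Q) + 4 * (∑ i, ∑ j, (starRingEnd ℂ) (P i j) * Q i j).re := by
  rw [EN, EN]
  have h : ∀ q : Fin n × Fin n,
      Complex.normSq ((P + Q) q.1 q.2)
        = Complex.normSq ((P - Q) q.1 q.2)
          + 4 * ((starRingEnd ℂ) (P q.1 q.2) * Q q.1 q.2).re := fun q => by
    simpa [Matrix.add_apply, Matrix.sub_apply] using normSq_add_eq (P q.1 q.2) (Q q.1 q.2)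
  rw [Finset.sum_congr rfl fun q _ => h q, Finset.sum_add_distrib]
  congr 1
  rw [← Finset.mul_sum]
  congr 1
  simp [Complex.re_sum, Fintype.sum_prod_type]

/-! ### Symmetry of the rearranged action -/

theorem Rv_apply (H : Matrix (Fin m × Fin n) (Fin m × Fin n) ℝ)
    (S : Matrix (Fin n) (Fin n) ℝ) (p : Fin m × Fin m) :
    ((rearrange H) *ᵥ _root_.vec S) p = ∑ q : Fin n × Fin n, H (p.1, q.1) (p.2, q.2) * S q.1 q.2 := by
  simp [rearrange, _root_.vec, Matrix.mulVec, dotProduct]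

theorem Rv_swap {H : Matrix (Fin m × Fin n) (Fin m × Fin n) ℝ}
    (HS : ∀ a b, H a b = H b a) {S : Matrix (Fin n) (Fin n) ℝ} {ε : ℝ}
    (hS : ∀ i j, S j i = ε * S i j) (p₁ p₂ : Fin m) :
    ((rearrange H) *ᵥ _root_.vec S) (p₂, p₁) = ε * ((rearrange H) *ᵥ _root_.vec S) (p₁, p₂) := by
  rw [Rv_apply, Rv_apply, Finset.mul_sum]
  refine Fintype.sum_equiv (Equiv.prodComm _ _) _ _ fun q => ?_
  simp only [Equiv.prodComm_apply, Prod.swap_prod_mk, Prod.fst_swap, Prod.snd_swap]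
  rw [HS (p₂, q.1) (p₁, q.2), hS q.2 q.1]
  ring

theorem cross_zero_real {H : Matrix (Fin m × Fin n) (Fin m × Fin n) ℝ}
    (HS : ∀ a b, H a b = H b a) {S K : Matrix (Fin n) (Fin n) ℝ}
    (hS : ∀ i j, S j i = S i j) (hK : ∀ i j, K j i = -K i j) :
    ∑ p : Fin m × Fin m,
      ((rearrange H) *ᵥ _root_.vec S) p * ((rearrange H) *ᵥ _root_.vec K) p = 0 := by
  have key : ∑ p : Fin m × Fin m, ((rearrange H) *ᵥ _root_.vec S) p * ((rearrange H) *ᵥ _root_.vec K) p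
      = ∑ p : Fin m × Fin m, -(((rearrange H) *ᵥ _root_.vec S) p * ((rearrange H) *ᵥ _root_.vec K) p) := by
    refine Fintype.sum_equiv (Equiv.prodComm _ _) _ _ fun p => ?_
    obtain ⟨a, b⟩ := p
    simp only [Equiv.prodComm_apply, Prod.swap_prod_mk]
    have h1 := Rv_swap HS (ε := 1) (S := S) (fun i j => by rw [hS i j, one_mul]) b a
    have h2 := Rv_swap HS (ε := -1) (S := K) (fun i j => by rw [hK i j]; ring) b a
    rw [h1, h2]
    ring
  have := Finset.sum_neg_distrib (s := (Finset.univ : Finset (Fin m × Fin m)))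
    (f := fun p => ((rearrange H) *ᵥ _root_.vec S) p * ((rearrange H) *ᵥ _root_.vec K) p)
  rw [this] at key
  linarith

/-! ### Real part of a complex PSD matrix -/

theorem reM_posSemidef {W' : Matrix (Fin n) (Fin n) ℂ} (hW' : W'.PosSemidef) :
    (reM W').PosSemidef := by
  rw [Matrix.posSemidef_iff_dotProduct_mulVec]
  constructor
  · ext i j
    have h := congrFun (congrFun hW'.1 i) j
    simp only [Matrix.conjTranspose_apply, Complex.star_def] at h
    simp only [Matrix.conjTranspose_apply, reM, Matrix.of_apply, star_trivial]
    rw [← h, Complex.conj_re]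
  · intro x
    have h := hW'.dotProduct_mulVec_nonneg (fun i => (x i : ℂ))
    rw [Complex.le_def] at h
    have hre := h.1
    simp only [Complex.zero_re] at hre
    have : (star (fun i => (x i : ℂ)) ⬝ᵥ W' *ᵥ (fun i => (x i : ℂ))).re
        = star x ⬝ᵥ reM W' *ᵥ x := by
      simp only [dotProduct, Matrix.mulVec, Pi.star_apply, Complex.star_def,
        Complex.conj_ofReal, star_trivial, reM, Matrix.of_apply, Complex.re_sum]
      refine Finset.sum_congr rfl fun i _ => ?_
      rw [show ((x i : ℂ) * ∑ j, W' i j * (x j : ℂ)).re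
          = x i * (∑ j, W' i j * (x j : ℂ)).re from by
        rw [mul_comm, Complex.mul_re]; simp [Complex.re_sum]; ring]
      rw [Complex.re_sum, Finset.mul_sum, Finset.mul_sum]
      refine Finset.sum_congr rfl fun j _ => ?_
      rw [Complex.mul_re]
      simp [mul_comm]
    rw [← this]
    exact hre

end VLP1

/-- (van Loan–Pitsianis) Let `H` be symmetric PSD, and let `σ > 0` be the largest
singular value of `R̂(H)` (i.e. `σ` bounds the ℓ²→ℓ² action of `R̂(H)` and is attained).
Then there is a top singular vector pair `(u₁, v₁)` of `R̂(H)` for `σ` such that the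
`n × n` matrix `V₁` with `vec(V₁) = v₁` is positive semidefinite. -/
theorem top_right_singular_factor_posSemidef {m n : ℕ}
    (H : Matrix (Fin m × Fin n) (Fin m × Fin n) ℝ) (hH : H.PosSemidef)
    (σ : ℝ) (hσ : 0 < σ)
    (htop : ∀ x : Fin n × Fin n → ℝ,
      ∑ p, ((rearrange H) *ᵥ x) p ^ 2 ≤ σ ^ 2 * ∑ q, x q ^ 2)
    (hattained : ∃ x : Fin n × Fin n → ℝ, (∑ q, x q ^ 2) = 1 ∧
      ∑ p, ((rearrange H) *ᵥ x) p ^ 2 = σ ^ 2) :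
    ∃ (u : Fin m × Fin m → ℝ) (v : Fin n × Fin n → ℝ),
      (∑ p, u p ^ 2) = 1 ∧ (∑ q, v q ^ 2) = 1 ∧
      (rearrange H) *ᵥ v = σ • u ∧ (rearrange H)ᵀ *ᵥ u = σ • v ∧
      (Matrix.of fun i j => v (i, j)).PosSemidef := by
  classical
  obtain ⟨x, hx1, hx2⟩ := hattained
  have HS : ∀ a b, H a b = H b a := by
    intro a b
    have h := congrFun (congrFun hH.1 a) b
    simpa [Matrix.conjTranspose_apply] using h.symm
  set S : Matrix (Fin n) (Fin n) ℝ := Matrix.of fun i j => (x (i, j) + x (j, i)) / 2 with hSdef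
  set K : Matrix (Fin n) (Fin n) ℝ := Matrix.of fun i j => (x (i, j) - x (j, i)) / 2 with hKdef
  have hSsym : ∀ i j, S j i = S i j := fun i j => by simp only [hSdef, Matrix.of_apply]; ring
  have hKasym : ∀ i j, K j i = -K i j := fun i j => by simp only [hKdef, Matrix.of_apply]; ring
  have hxsplit : x = _root_.vec S + _root_.vec K := by
    funext q
    simp only [Pi.add_apply, _root_.vec, hSdef, hKdef, Matrix.of_apply, Prod.mk.eta]
    ring
  have hRsplit : ∑ p, ((rearrange H) *ᵥ x) p ^ 2
      = (∑ p, ((rearrange H) *ᵥ _root_.vec S) p ^ 2) + ∑ p, ((rearrange H) *ᵥ _root_.vec K) p ^ 2 := by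
    have hadd : (rearrange H) *ᵥ x = (rearrange H) *ᵥ _root_.vec S + (rearrange H) *ᵥ _root_.vec K := by
      rw [hxsplit, Matrix.mulVec_add]
    rw [hadd]
    calc ∑ p, ((rearrange H *ᵥ _root_.vec S + rearrange H *ᵥ _root_.vec K) p) ^ 2
        = ∑ p, (((rearrange H *ᵥ _root_.vec S) p) ^ 2 + ((rearrange H *ᵥ _root_.vec K) p) ^ 2
            + 2 * ((rearrange H *ᵥ _root_.vec S) p * (rearrange H *ᵥ _root_.vec K) p)) := by
          refine Finset.sum_congr rfl fun p _ => ?_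
          simp only [Pi.add_apply]
          ring
      _ = (∑ p, ((rearrange H) *ᵥ _root_.vec S) p ^ 2) + (∑ p, ((rearrange H) *ᵥ _root_.vec K) p ^ 2)
            + 2 * ∑ p : Fin m × Fin m, (rearrange H *ᵥ _root_.vec S) p * (rearrange H *ᵥ _root_.vec K) p := by
          rw [Finset.sum_add_distrib, Finset.sum_add_distrib, ← Finset.mul_sum]
      _ = _ := by rw [VLP1.cross_zero_real HS hSsym hKasym]; ring
  set M : Matrix (Fin n) (Fin n) ℂ :=
    Matrix.of fun i j => (S i j : ℂ) - Complex.I * (K i j : ℂ) with hMdef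
  have hreM : VLP1.reM M = S := by
    ext i j
    simp [VLP1.reM, hMdef]
  have himM : VLP1.imM M = -K := by
    ext i j
    simp [VLP1.imM, hMdef]
  have hMherm : M.IsHermitian := by
    ext i j
    rw [Matrix.conjTranspose_apply, show M j i = ((S j i : ℂ) - Complex.I * (K j i : ℂ)) from rfl,
      show M i j = ((S i j : ℂ) - Complex.I * (K i j : ℂ)) from rfl, hSsym i j, hKasym i j,
      star_sub, star_mul']
    simp only [Complex.star_def, Complex.conj_I, Complex.conj_ofReal]
    push_cast
    ring
  have hENM : VLP1.EN M = 1 := by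
    rw [VLP1.EN]
    have h1 : ∀ q : Fin n × Fin n,
        Complex.normSq (M q.1 q.2) = (x q ^ 2 + x (q.2, q.1) ^ 2) / 2 := by
      intro q
      simp only [hMdef, Matrix.of_apply, Complex.normSq_apply, Complex.sub_re, Complex.sub_im,
        Complex.mul_re, Complex.mul_im, Complex.I_re, Complex.I_im, Complex.ofReal_re,
        Complex.ofReal_im, hSdef, hKdef, Prod.mk.eta]
      ring
    rw [Finset.sum_congr rfl fun q _ => h1 q]
    have h2 : ∑ q : Fin n × Fin n, x (q.2, q.1) ^ 2 = ∑ q, x q ^ 2 :=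
      Fintype.sum_equiv (Equiv.prodComm _ _) _ _ fun q => rfl
    have h3 : ∑ q : Fin n × Fin n, (x q ^ 2 + x (q.2, q.1) ^ 2) / 2
        = ((∑ q, x q ^ 2) + ∑ q : Fin n × Fin n, x (q.2, q.1) ^ 2) / 2 := by
      rw [← Finset.sum_add_distrib, ← Finset.sum_div]
    rw [h3, h2, hx1]
    norm_num
  have hEPM : VLP1.EP H M = σ ^ 2 := by
    rw [VLP1.EP_eq, hreM, himM]
    have hneg : (rearrange H) *ᵥ _root_.vec (-K) = -((rearrange H) *ᵥ _root_.vec K) := by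
      rw [show _root_.vec (-K) = -(_root_.vec K) from funext fun q => by simp [_root_.vec], Matrix.mulVec_neg]
    rw [hneg]
    simp only [Pi.neg_apply, neg_sq]
    rw [← hRsplit, hx2]
  have hM0 : M ≠ 0 := by
    intro h
    rw [h] at hENM
    simp [VLP1.EN] at hENM
  obtain ⟨P, Q, hPp, hQp, hPQM, hPQ0, htr⟩ := VLP1.spectral_split hMherm
  have hW'psd : (P + Q).PosSemidef := hPp.add hQp
  have hENW' : VLP1.EN (P + Q) = 1 := by
    rw [VLP1.EN_expand, hPQM, VLP1.cross_zero hPp.1 hPQ0, hENM]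
    simp
  have hEPW' : σ ^ 2 ≤ VLP1.EP H (P + Q) := by
    rw [VLP1.EP_expand, hPQM, hEPM]
    have := VLP1.cross_nonneg (VLP1.cPsi_posSemidef hH hPp) (VLP1.cPsi_posSemidef hH hQp)
    linarith
  set W : Matrix (Fin n) (Fin n) ℝ := VLP1.reM (P + Q) with hWdef
  have hWpsd : W.PosSemidef := VLP1.reM_posSemidef hW'psd
  set cW : ℝ := ∑ q : Fin n × Fin n, _root_.vec W q ^ 2 with hcW
  set cI : ℝ := ∑ q : Fin n × Fin n, _root_.vec (VLP1.imM (P + Q)) q ^ 2 with hcI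
  have hEN_split : cW + cI = 1 := by
    rw [VLP1.EN_eq] at hENW'
    rw [hcW, hcI, hWdef]
    exact hENW'
  have hEP_split : VLP1.EP H (P + Q)
      = (∑ p, ((rearrange H) *ᵥ _root_.vec W) p ^ 2)
        + ∑ p, ((rearrange H) *ᵥ _root_.vec (VLP1.imM (P + Q))) p ^ 2 := by
    rw [VLP1.EP_eq, hWdef]
  have him_le := htop (_root_.vec (VLP1.imM (P + Q)))
  have hmul : σ ^ 2 * cW + σ ^ 2 * cI = σ ^ 2 := by
    rw [← mul_add, hEN_split, mul_one]
  have hW_ge : σ ^ 2 * cW ≤ ∑ p, ((rearrange H) *ᵥ _root_.vec W) p ^ 2 := by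
    rw [← hcI] at him_le
    linarith [hEP_split ▸ hEPW']
  have hW_le := htop (_root_.vec W)
  rw [← hcW] at hW_le
  have hW_eq : ∑ p, ((rearrange H) *ᵥ _root_.vec W) p ^ 2 = σ ^ 2 * cW := le_antisymm hW_le hW_ge
  have htrpos := htr hM0
  have htrW : (P + Q).trace.re = ∑ i, W i i := by
    rw [Matrix.trace, Complex.re_sum]
    refine Finset.sum_congr rfl fun i _ => ?_
    simp [hWdef, VLP1.reM, Matrix.diag_apply]
  have hex : ∃ i, W i i ≠ 0 := by
    by_contra hc
    push_neg at hc
    rw [htrW] at htrpos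
    simp only [hc, Finset.sum_const_zero] at htrpos
    exact lt_irrefl _ htrpos
  obtain ⟨i0, hi0⟩ := hex
  have hcWpos : 0 < cW := by
    have h1 : _root_.vec W (i0, i0) ^ 2 ≤ cW := hcW ▸
      Finset.single_le_sum (f := fun q : Fin n × Fin n => _root_.vec W q ^ 2)
        (fun q _ => sq_nonneg _) (Finset.mem_univ (i0, i0))
    have h2 : 0 < _root_.vec W (i0, i0) ^ 2 := by
      have hne : _root_.vec W (i0, i0) ≠ 0 := by simpa [_root_.vec] using hi0
      positivity
    linarith
  have heig := VLP1.eig_lemma htop (w := _root_.vec W) (by rw [hW_eq, hcW])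
  set s : ℝ := Real.sqrt cW with hs
  have hs0 : 0 < s := Real.sqrt_pos.mpr hcWpos
  have hs2 : s ^ 2 = cW := Real.sq_sqrt hcWpos.le
  refine ⟨σ⁻¹ • ((rearrange H) *ᵥ (s⁻¹ • _root_.vec W)), s⁻¹ • _root_.vec W, ?_, ?_, ?_, ?_, ?_⟩
  · rw [Matrix.mulVec_smul]
    simp only [Pi.smul_apply, smul_eq_mul, mul_pow, ← Finset.mul_sum]
    rw [hW_eq, ← hs2]
    field_simp
  · simp only [Pi.smul_apply, smul_eq_mul, mul_pow, ← Finset.mul_sum, ← hcW, ← hs2]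
    field_simp
  · rw [smul_smul, mul_inv_cancel₀ hσ.ne', one_smul]
  · rw [Matrix.mulVec_smul, Matrix.mulVec_smul, Matrix.mulVec_smul, heig]
    rw [smul_smul, smul_smul, smul_smul]
    congr 1
    field_simp
  · have hmat : (Matrix.of fun i j => (s⁻¹ • _root_.vec W) (i, j)) = s⁻¹ • W := by
      ext i j
      simp [_root_.vec, Matrix.smul_apply]
    rw [hmat]
    rw [Matrix.posSemidef_iff_dotProduct_mulVec]
    constructor
    · ext i j
      have h := congrFun (congrFun hWpsd.1 i) j
      simp only [Matrix.conjTranspose_apply, star_trivial, Matrix.smul_apply] at h ⊢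
      rw [h]
    · intro y
      have h := hWpsd.dotProduct_mulVec_nonneg y
      rw [Matrix.smul_mulVec, dotProduct_smul]
      exact smul_nonneg (by positivity) h
end

section
/- Let S_q denote the set of symmetric positive semidefinite q×q real matrices of unit Frobenius norm. Then the matrix (1/√q) I_q is the unique maximizer over M ∈ S_q of min_{M' ∈ S_q} ⟨M, M'⟩, where ⟨M, M'⟩ = Tr(M M'). Moreover the optimal value equals 1/√q. -/
open Matrix

/-- `unitPSD q` is the set `S_q` of symmetric PSD `q × q` matrices of unit
Frobenius norm. -/
def unitPSD (q : ℕ) : Set (Matrix (Fin q) (Fin q) ℝ) :=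
  {M | M.PosSemidef ∧ ∑ i, ∑ j, (M i j) ^ 2 = 1}

/-- `minInner q M = min_{M' ∈ S_q} ⟨M, M'⟩` where `⟨M, M'⟩ = Tr(M M')`. -/
noncomputable def minInner (q : ℕ) (M : Matrix (Fin q) (Fin q) ℝ) : ℝ :=
  sInf ((fun M' => (M * M').trace) '' unitPSD q)

/-! ### Auxiliary lemmas -/

lemma psd_diag_nonneg {q : ℕ} {M : Matrix (Fin q) (Fin q) ℝ} (hM : M.PosSemidef) (i : Fin q) :
    0 ≤ M i i := by
  have := hM.dotProduct_mulVec_nonneg (Pi.single i 1)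
  simpa using this

lemma psd_entry_sq_le {q : ℕ} {M : Matrix (Fin q) (Fin q) ℝ} (hM : M.PosSemidef)
    (i j : Fin q) : (M i j)^2 ≤ M i i * M j j := by
  have hsym : M j i = M i j := hM.1.apply j i ▸ rfl
  have key : ∀ t : ℝ, 0 ≤ M i i * (t * t) + (2 * M i j) * t + M j j := by
    intro t
    have h := hM.dotProduct_mulVec_nonneg (t • (Pi.single i 1 : Fin q → ℝ) + Pi.single j 1)
    simp only [star_trivial, mulVec_add, mulVec_smul, dotProduct_add, add_dotProduct,
      smul_dotProduct, dotProduct_smul, mulVec_single, dotProduct_single, single_dotProduct,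
      smul_eq_mul, mul_one, one_mul, Matrix.col_apply, MulOpposite.op_one, one_smul] at h
    rw [hsym] at h; nlinarith [h]
  have hd := discrim_le_zero key
  rw [discrim] at hd
  nlinarith [hd]

lemma psd_trace_mul_nonneg {q : ℕ} {A B : Matrix (Fin q) (Fin q) ℝ}
    (hA : A.PosSemidef) (hB : B.PosSemidef) : 0 ≤ (A * B).trace := by
  obtain ⟨C, rfl⟩ : ∃ C : Matrix (Fin q) (Fin q) ℝ, A = Cᴴ * C := by
    open scoped MatrixOrder in
    exact CStarAlgebra.nonneg_iff_eq_star_mul_self.mp hA.nonneg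
  rw [Matrix.mul_assoc, Matrix.trace_mul_comm]
  have h := hB.mul_mul_conjTranspose_same C
  calc (0:ℝ) ≤ ∑ i, (C * B * Cᴴ) i i := Finset.sum_nonneg fun i _ => psd_diag_nonneg h i
    _ = (C * B * Cᴴ).trace := rfl

lemma trace_ge_one {q : ℕ} {M : Matrix (Fin q) (Fin q) ℝ} (hM : M ∈ unitPSD q) :
    1 ≤ M.trace := by
  have h1 : (1:ℝ) = ∑ i, ∑ j, (M i j)^2 := hM.2.symm
  have h2 : ∑ i, ∑ j, (M i j)^2 ≤ ∑ i, ∑ j, M i i * M j j :=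
    Finset.sum_le_sum fun i _ => Finset.sum_le_sum fun j _ => psd_entry_sq_le hM.1 i j
  have h3 : ∑ i, ∑ j, M i i * M j j = (∑ i, M i i) * (∑ j, M j j) :=
    (Finset.sum_mul_sum _ _ _ _).symm
  have h4 : 0 ≤ ∑ i : Fin q, M i i := Finset.sum_nonneg fun i _ => psd_diag_nonneg hM.1 i
  have ht : M.trace = ∑ i, M i i := rfl
  rw [ht]
  nlinarith [h1, h2, h3, h4]

lemma rankOne_mem {q : ℕ} {v : Fin q → ℝ} (hv : ∑ i, (v i)^2 = 1) :
    vecMulVec v v ∈ unitPSD q := by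
  constructor
  · refine Matrix.PosSemidef.of_dotProduct_mulVec_nonneg ?_ ?_
    · ext i j; simp [conjTranspose_apply, vecMulVec_apply, mul_comm]
    · intro x
      have : star x ⬝ᵥ (vecMulVec v v) *ᵥ x = (v ⬝ᵥ x) * (v ⬝ᵥ x) := by
        simp [dotProduct, mulVec, vecMulVec_apply, Finset.sum_mul, Finset.mul_sum]
        rw [Finset.sum_comm]
        congr 1; ext a; congr 1; ext b; ring
      rw [this]
      exact mul_self_nonneg _
  · show ∑ i, ∑ j, (vecMulVec v v i j)^2 = 1
    simp only [vecMulVec_apply, mul_pow, ← Finset.sum_mul, ← Finset.mul_sum, hv]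
    simp [hv]

lemma trace_mul_rankOne {q : ℕ} (M : Matrix (Fin q) (Fin q) ℝ) (v : Fin q → ℝ) :
    (M * vecMulVec v v).trace = v ⬝ᵥ (M *ᵥ v) := by
  simp only [Matrix.trace, Matrix.diag, mul_apply, vecMulVec_apply, dotProduct, mulVec,
    dotProduct, Finset.mul_sum]
  congr 1; ext a; congr 1; ext b; ring

lemma e0_unit {q : ℕ} (hq : 0 < q) :
    ∑ i, ((Pi.single (⟨0, hq⟩ : Fin q) 1 : Fin q → ℝ) i)^2 = 1 := by
  rw [Finset.sum_eq_single (⟨0, hq⟩ : Fin q)]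
  · simp
  · intro b _ hb; simp [Pi.single_apply, hb]
  · simp

lemma unitPSD_nonempty {q : ℕ} (hq : 0 < q) : (unitPSD q).Nonempty :=
  ⟨_, rankOne_mem (e0_unit hq)⟩

lemma bddBelow_inner {q : ℕ} {M : Matrix (Fin q) (Fin q) ℝ} (hM : M.PosSemidef) :
    BddBelow ((fun M' => (M * M').trace) '' unitPSD q) := by
  refine ⟨0, fun x hx => ?_⟩
  obtain ⟨M', hM', rfl⟩ := hx
  exact psd_trace_mul_nonneg hM hM'.1

lemma sum_eigen_sq {q : ℕ} {M : Matrix (Fin q) (Fin q) ℝ} (hH : M.IsHermitian)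
    (hnorm : ∑ i, ∑ j, (M i j)^2 = 1) :
    ∑ i, (hH.eigenvalues i)^2 = 1 := by
  have hsym : ∀ i j, M j i = M i j := fun i j => hH.apply j i ▸ rfl
  have h1 : (M * M).trace = ∑ i, ∑ j, (M i j)^2 := by
    simp only [Matrix.trace, Matrix.diag, mul_apply, sq]
    exact Finset.sum_congr rfl fun i _ => Finset.sum_congr rfl fun j _ => by rw [hsym i j]
  set U : Matrix (Fin q) (Fin q) ℝ := (hH.eigenvectorUnitary : Matrix (Fin q) (Fin q) ℝ)
  have hU' : star U * U = 1 := (Matrix.mem_unitaryGroup_iff').mp hH.eigenvectorUnitary.2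
  set D : Matrix (Fin q) (Fin q) ℝ := diagonal (RCLike.ofReal ∘ hH.eigenvalues)
  have hspec : M = U * D * star U := hH.spectral_theorem
  have h2 : M * M = U * (D * D) * star U := by
    rw [hspec]
    calc U * D * star U * (U * D * star U)
        = U * D * (star U * U) * (D * star U) := by simp only [Matrix.mul_assoc]
      _ = U * (D * D) * star U := by rw [hU']; simp only [Matrix.mul_one, Matrix.mul_assoc]
  have h3 : (M * M).trace = (D * D).trace := by
    rw [h2, Matrix.trace_mul_cycle, ← Matrix.mul_assoc, hU', Matrix.one_mul]
  have h4 : (D * D).trace = ∑ i, (hH.eigenvalues i)^2 := by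
    simp [D, diagonal_mul_diagonal, Matrix.trace_diagonal, sq]
  rw [← h4, ← h3, h1, hnorm]

lemma all_eq_of_eigen {q : ℕ} {M : Matrix (Fin q) (Fin q) ℝ} (hH : M.IsHermitian)
    (c : ℝ) (hall : ∀ i, hH.eigenvalues i = c) :
    M = c • (1 : Matrix (Fin q) (Fin q) ℝ) := by
  set U : Matrix (Fin q) (Fin q) ℝ := (hH.eigenvectorUnitary : Matrix (Fin q) (Fin q) ℝ)
  have hU : U * star U = 1 := (Matrix.mem_unitaryGroup_iff).mp hH.eigenvectorUnitary.2
  have hD : diagonal (RCLike.ofReal ∘ hH.eigenvalues) = c • (1 : Matrix (Fin q) (Fin q) ℝ) := by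
    have h : (RCLike.ofReal ∘ hH.eigenvalues : Fin q → ℝ) = fun _ => c := by
      funext i; simp [hall i]
    rw [h, smul_one_eq_diagonal]
  calc M = U * diagonal (RCLike.ofReal ∘ hH.eigenvalues) * star U := hH.spectral_theorem
    _ = U * (c • (1 : Matrix (Fin q) (Fin q) ℝ)) * star U := by rw [hD]
    _ = c • (U * star U) := by
        rw [Matrix.mul_smul, Matrix.mul_one, Matrix.smul_mul]
    _ = c • 1 := by rw [hU]

lemma eigenvector_unit {q : ℕ} {M : Matrix (Fin q) (Fin q) ℝ} (hH : M.IsHermitian) (j : Fin q) :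
    ∑ i, ((hH.eigenvectorBasis j : EuclideanSpace ℝ (Fin q)) i)^2 = 1 := by
  have hn : ‖hH.eigenvectorBasis j‖ = 1 := hH.eigenvectorBasis.orthonormal.1 j
  have := EuclideanSpace.norm_eq (hH.eigenvectorBasis j)
  rw [hn] at this
  have h2 : ∑ i, ‖(hH.eigenvectorBasis j : EuclideanSpace ℝ (Fin q)) i‖^2 = 1 := by
    have hs := congrArg (·^2) this.symm
    simpa [Real.sq_sqrt (Finset.sum_nonneg fun i _ => sq_nonneg _)] using hs
  simpa [Real.norm_eq_abs, sq_abs] using h2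

lemma inner_eq_eigenvalue {q : ℕ} {M : Matrix (Fin q) (Fin q) ℝ} {v : Fin q → ℝ} {t : ℝ}
    (hv : ∑ i, (v i)^2 = 1) (hm : M *ᵥ v = t • v) : v ⬝ᵥ (M *ᵥ v) = t := by
  rw [hm, dotProduct_smul, smul_eq_mul]
  have : v ⬝ᵥ v = 1 := by simpa [dotProduct, sq] using hv
  rw [this, mul_one]

/-- `(1/√q) I_q` is the unique maximizer over `M ∈ S_q` of
`min_{M' ∈ S_q} ⟨M, M'⟩`, and the optimal value is `1/√q`. -/
theorem identity_maximizes_min_inner (q : ℕ) (hq : 0 < q) :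
    ((Real.sqrt q)⁻¹ • (1 : Matrix (Fin q) (Fin q) ℝ)) ∈ unitPSD q ∧
    minInner q ((Real.sqrt q)⁻¹ • (1 : Matrix (Fin q) (Fin q) ℝ)) = (Real.sqrt q)⁻¹ ∧
    ∀ M ∈ unitPSD q, M ≠ (Real.sqrt q)⁻¹ • (1 : Matrix (Fin q) (Fin q) ℝ) →
      minInner q M < (Real.sqrt q)⁻¹ := by
  have hc : (0:ℝ) < (Real.sqrt q)⁻¹ := by
    have : (0:ℝ) < Real.sqrt q := Real.sqrt_pos.mpr (by exact_mod_cast hq)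
    positivity
  set c := (Real.sqrt q)⁻¹ with hcdef
  have hsq : c^2 = (q:ℝ)⁻¹ := by
    rw [hcdef, ← Real.sqrt_inv]
    exact Real.sq_sqrt (by positivity)
  have hpsd1 : (c • (1 : Matrix (Fin q) (Fin q) ℝ)).PosSemidef := by
    rw [smul_one_eq_diagonal]
    exact Matrix.PosSemidef.diagonal fun i => hc.le
  have hmem1 : (c • (1 : Matrix (Fin q) (Fin q) ℝ)) ∈ unitPSD q := by
    refine ⟨hpsd1, ?_⟩
    simp only [Matrix.smul_apply, Matrix.one_apply, smul_eq_mul, mul_ite, mul_one, mul_zero]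
    have hrow : ∀ i : Fin q, ∑ j, (if i = j then c else 0)^2 = (q:ℝ)⁻¹ := by
      intro i
      rw [Finset.sum_eq_single i]
      · simp [hsq]
      · intro b _ hb; simp [Ne.symm hb]
      · simp
    rw [Finset.sum_congr rfl fun i _ => hrow i]
    simp
    field_simp
  refine ⟨hmem1, ?_, ?_⟩
  · -- value at the identity
    have hval : ∀ M' ∈ unitPSD q,
        ((c • (1 : Matrix (Fin q) (Fin q) ℝ)) * M').trace = c * M'.trace := by
      intro M' _
      rw [Matrix.smul_mul, Matrix.one_mul, Matrix.trace_smul, smul_eq_mul]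
    apply le_antisymm
    · have hmem := rankOne_mem (e0_unit hq)
      have htr : (vecMulVec (Pi.single (⟨0, hq⟩ : Fin q) 1 : Fin q → ℝ)
          (Pi.single (⟨0, hq⟩ : Fin q) 1)).trace = 1 := by
        have := e0_unit hq
        simp only [Matrix.trace, Matrix.diag, vecMulVec_apply, ← sq]
        exact this
      have hone : ((c • (1 : Matrix (Fin q) (Fin q) ℝ)) *
          vecMulVec (Pi.single (⟨0, hq⟩ : Fin q) 1 : Fin q → ℝ)
            (Pi.single (⟨0, hq⟩ : Fin q) 1)).trace = c := by
        rw [hval _ hmem, htr, mul_one]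
      exact csInf_le (bddBelow_inner hpsd1) ⟨_, hmem, hone⟩
    · refine le_csInf ((unitPSD_nonempty hq).image _) ?_
      rintro x ⟨M', hM', rfl⟩
      show c ≤ ((c • (1 : Matrix (Fin q) (Fin q) ℝ)) * M').trace
      rw [hval _ hM']
      calc c = c * 1 := (mul_one c).symm
        _ ≤ c * M'.trace := mul_le_mul_of_nonneg_left (trace_ge_one hM') hc.le
  · -- uniqueness
    intro M hM hne
    have hH : M.IsHermitian := hM.1.1
    have hnn : ∀ i, 0 ≤ hH.eigenvalues i := hM.1.eigenvalues_nonneg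
    have hsum : ∑ i, (hH.eigenvalues i)^2 = 1 := sum_eigen_sq hH hM.2
    have hex : ∃ j, hH.eigenvalues j < c := by
      by_contra hcon
      push_neg at hcon
      have hle : ∀ j ∈ Finset.univ, c^2 ≤ (hH.eigenvalues j)^2 := fun j _ => by
        nlinarith [hcon j, hc.le]
      have hsc : ∑ _j : Fin q, c^2 = 1 := by
        rw [Finset.sum_const, Finset.card_univ, Fintype.card_fin, nsmul_eq_mul, hsq]
        field_simp
      have heq := (Finset.sum_eq_sum_iff_of_le hle).mp (by rw [hsc, hsum])
      have hall : ∀ i, hH.eigenvalues i = c := by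
        intro i
        have h2 : c^2 = (hH.eigenvalues i)^2 := heq i (Finset.mem_univ i)
        exact (pow_left_inj₀ (hnn i) hc.le two_ne_zero).mp h2.symm
      exact hne (all_eq_of_eigen hH c hall)
    obtain ⟨j, hj⟩ := hex
    have hm := hH.mulVec_eigenvectorBasis j
    set v : Fin q → ℝ := ⇑(hH.eigenvectorBasis j) with hv
    have h1 : ∑ i, (v i)^2 = 1 := eigenvector_unit hH j
    have hmemv := rankOne_mem h1
    have hvalv : (M * vecMulVec v v).trace = hH.eigenvalues j := by
      rw [trace_mul_rankOne]
      exact inner_eq_eigenvalue h1 hm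
    calc minInner q M ≤ hH.eigenvalues j :=
        csInf_le (bddBelow_inner hM.1) ⟨_, hmemv, hvalv⟩
      _ < c := hj
end

section
/- Suppose H ∈ ℝ^{mn×mn} is such that its rearrangement R̂(H) ∈ ℝ^{m²×n²} has rank one, i.e., H = σ U ⊗ V with vec(U), vec(V) unit vectors, σ > 0, and Tr(U) ≠ 0, Tr(V) ≠ 0. Define L ∈ ℝ^{m×m} and R ∈ ℝ^{n×n} by the one-step power-iteration formulas vec(L) = R̂(H) vec(I_n) and vec(R) = R̂(H)ᵀ vec(I_m). Then L = σ Tr(V) U, R = σ Tr(U) V, Tr(L) = σ Tr(U) Tr(V), and H = (L ⊗ R)/Tr(L). -/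
open Matrix Kronecker

/-- If `R̂(H)` has rank one, i.e. `H = σ U ⊗ V` with `vec U, vec V` unit vectors,
`σ > 0` and `Tr U ≠ 0`, `Tr V ≠ 0`, then the one-step power-iteration matrices
`L, R` (with `vec L = R̂(H) vec(Iₙ)`, `vec R = R̂(H)ᵀ vec(Iₘ)`) satisfy
`L = σ Tr(V) U`, `R = σ Tr(U) V`, `Tr L = σ Tr(U) Tr(V)` and `H = (L ⊗ R)/Tr(L)`. -/
theorem rank_one_rearrangement_recovery {m n : ℕ}
    (H : Matrix (Fin m × Fin n) (Fin m × Fin n) ℝ)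
    (σ : ℝ) (hσ : 0 < σ)
    (U : Matrix (Fin m) (Fin m) ℝ) (V : Matrix (Fin n) (Fin n) ℝ)
    (hU : ∑ i, ∑ j, (U i j) ^ 2 = 1) (hV : ∑ i, ∑ j, (V i j) ^ 2 = 1)
    (htU : U.trace ≠ 0) (htV : V.trace ≠ 0)
    (hH : H = σ • (U ⊗ₖ V))
    (L : Matrix (Fin m) (Fin m) ℝ) (R : Matrix (Fin n) (Fin n) ℝ)
    (hLdef : _root_.vec L = (rearrange H) *ᵥ _root_.vec (1 : Matrix (Fin n) (Fin n) ℝ))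
    (hRdef : _root_.vec R = (rearrange H)ᵀ *ᵥ _root_.vec (1 : Matrix (Fin m) (Fin m) ℝ)) :
    L = (σ * V.trace) • U ∧ R = (σ * U.trace) • V ∧
    L.trace = σ * U.trace * V.trace ∧
    H = (L.trace)⁻¹ • (L ⊗ₖ R) := by
  have hL : L = (σ * V.trace) • U := by
    ext i j
    have h := congrFun hLdef (i, j)
    simp only [_root_.vec, rearrange, mulVec, dotProduct, hH, Matrix.of_apply,
      Matrix.smul_apply, kroneckerMap_apply, Matrix.one_apply,
      Fintype.sum_prod_type, Matrix.trace, Matrix.diag, smul_eq_mul] at h ⊢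
    rw [h]
    simp only [mul_ite, mul_one, mul_zero, Finset.sum_ite_eq, Finset.sum_ite_eq',
      Finset.mem_univ, if_true, Finset.mul_sum, Finset.sum_mul]
    exact Finset.sum_congr rfl fun a _ => by ring
  have hR : R = (σ * U.trace) • V := by
    ext i j
    have h := congrFun hRdef (i, j)
    simp only [_root_.vec, rearrange, mulVec, dotProduct, hH, Matrix.of_apply,
      Matrix.transpose_apply, Matrix.smul_apply, kroneckerMap_apply,
      Matrix.one_apply, Fintype.sum_prod_type, Matrix.trace, Matrix.diag,
      smul_eq_mul] at h ⊢
    rw [h]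
    simp only [mul_ite, mul_one, mul_zero, Finset.sum_ite_eq, Finset.sum_ite_eq',
      Finset.mem_univ, if_true, Finset.mul_sum, Finset.sum_mul]
    exact Finset.sum_congr rfl fun a _ => by ring
  have htL : L.trace = σ * U.trace * V.trace := by
    rw [hL, Matrix.trace_smul, smul_eq_mul]; ring
  refine ⟨hL, hR, htL, ?_⟩
  rw [hH, htL, hL, hR, Matrix.smul_kronecker, Matrix.kronecker_smul,
    smul_smul, smul_smul]
  congr 1
  field_simp
end
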